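/- If Γ₁ is a countably infinite group and Γ₂ is a finite group with at least two elements, then the free product Γ₁ * Γ₂ admits a faithful homogeneous action by automorphisms on any countable simple graph with property (R). -/

import Mathlib

/-- A simple graph has property (R) if for all disjoint finite subsets `U`, `W` of its
vertex set there exists a vertex outside `U ∪ W` adjacent to every vertex of `U` and to
no vertex of `W`. -/
def SimpleGraph.HasPropR {V : Type*} (G : SimpleGraph V) : Prop :=
  ∀ U W : Finset V, Disjoint U W →
    ∃ z, z ∉ U ∧ z ∉ W ∧ (∀ u ∈ U, G.Adj z u) ∧ (∀ w ∈ W, ¬ G.Adj z w)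

namespace FMS


open Function

attribute [local instance] Classical.propDecidable

variable {Γ₁ : Type*} [Group Γ₁]

/-- Auxiliary graph on `Γ₁ × ℕ`. -/
def gx (dec : ℕ → Finset (Γ₁ × ℕ)) : SimpleGraph (Γ₁ × ℕ) where
  Adj p q := (p.2 < q.2 ∧ (q.1⁻¹ * p.1, p.2) ∈ dec q.2) ∨ (q.2 < p.2 ∧ (p.1⁻¹ * q.1, q.2) ∈ dec p.2)
  symm := ⟨by intro p q h; tauto⟩
  loopless := ⟨by intro p h; rcases h with ⟨h, _⟩ | ⟨h, _⟩ <;> exact lt_irrefl _ h⟩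

/-- Translation action. -/
def τ (h : Γ₁) (p : Γ₁ × ℕ) : Γ₁ × ℕ := (h * p.1, p.2)

lemma τ_mul (g h : Γ₁) (p : Γ₁ × ℕ) : τ (g * h) p = τ g (τ h p) := by
  simp [τ, mul_assoc]

lemma τ_one (p : Γ₁ × ℕ) : τ (1 : Γ₁) p = p := by simp [τ]

lemma τ_inj (h : Γ₁) : Function.Injective (τ h) := by
  intro p q hpq
  have h1 := congrArg Prod.fst hpq
  have h2 := congrArg Prod.snd hpq
  simp only [τ] at h1 h2
  exact Prod.ext (mul_left_cancel h1) h2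

lemma τ_free {h : Γ₁} {p : Γ₁ × ℕ} (hp : τ h p = p) : h = 1 := by
  have h1 : h * p.1 = p.1 := congrArg Prod.fst hp
  have := mul_right_cancel (b := p.1) (a := h) (c := 1) (by simpa using h1)
  exact this

lemma gx_adj_τ (dec : ℕ → Finset (Γ₁ × ℕ)) (h : Γ₁) (p q : Γ₁ × ℕ) :
    (gx dec).Adj (τ h p) (τ h q) ↔ (gx dec).Adj p q := by
  simp only [gx, τ, SimpleGraph.Adj]
  constructor <;> intro hh <;>
    [skip; skip] <;>
    · rcases hh with ⟨h1, h2⟩ | ⟨h1, h2⟩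
      · exact Or.inl ⟨h1, by simpa [mul_assoc] using h2⟩
      · exact Or.inr ⟨h1, by simpa [mul_assoc] using h2⟩

lemma gx_not_adj_τ_self (dec : ℕ → Finset (Γ₁ × ℕ)) (h : Γ₁) (p : Γ₁ × ℕ) :
    ¬ (gx dec).Adj (τ h p) p := by
  intro hcon
  rcases hcon with ⟨h1, _⟩ | ⟨h1, _⟩ <;> exact lt_irrefl _ h1

/-- decoding richness hypothesis -/
def DecRich (dec : ℕ → Finset (Γ₁ × ℕ)) : Prop :=
  ∀ (U : Finset (Γ₁ × ℕ)) (n : ℕ), ∃ k, n < k ∧ dec k = U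

lemma gx_propR {dec : ℕ → Finset (Γ₁ × ℕ)} (hdec : DecRich dec) :
    (gx dec).HasPropR := by
  intro U W hUW
  obtain ⟨k, hk, hdk⟩ := hdec U ((U ∪ W).sup Prod.snd)
  refine ⟨((1 : Γ₁), k), ?_, ?_, ?_, ?_⟩
  · intro hz
    have : k ≤ (U ∪ W).sup Prod.snd := Finset.le_sup (f := Prod.snd) (Finset.mem_union_left _ hz)
    omega
  · intro hz
    have : k ≤ (U ∪ W).sup Prod.snd := Finset.le_sup (f := Prod.snd) (Finset.mem_union_right _ hz)
    omega
  · intro u hu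
    have hu2 : u.2 ≤ (U ∪ W).sup Prod.snd := Finset.le_sup (f := Prod.snd) (Finset.mem_union_left _ hu)
    refine Or.inr ⟨by omega, ?_⟩
    simpa [hdk] using hu
  · intro w hw
    have hw2 : w.2 ≤ (U ∪ W).sup Prod.snd := Finset.le_sup (f := Prod.snd) (Finset.mem_union_right _ hw)
    rintro (⟨h1, _⟩ | ⟨h1, h2⟩)
    · omega
    · rw [hdk] at h2
      simp only [inv_one, one_mul] at h2
      exact (Finset.disjoint_left.1 hUW h2) hw

lemma star_finite (dec : ℕ → Finset (Γ₁ × ℕ)) (F : Finset ((Γ₁ × ℕ) × (Γ₁ × ℕ))) :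
    {h : Γ₁ | ∃ q ∈ F, τ h q.1 = q.2 ∨ (gx dec).Adj (τ h q.1) q.2}.Finite := by
  have : {h : Γ₁ | ∃ q ∈ F, τ h q.1 = q.2 ∨ (gx dec).Adj (τ h q.1) q.2} ⊆
      ↑(F.biUnion fun q =>
        {q.2.1 * q.1.1⁻¹} ∪ (dec q.2.2).image (fun s => q.2.1 * s.1 * q.1.1⁻¹)
          ∪ (dec q.1.2).image (fun s => (q.1.1 * s.1 * q.2.1⁻¹)⁻¹)) := by
    rintro h ⟨q, hq, hcase⟩
    simp only [Finset.coe_biUnion, Set.mem_iUnion, Finset.mem_coe, Finset.mem_union,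
      Finset.mem_singleton, Finset.mem_image]
    refine ⟨q, hq, ?_⟩
    rcases hcase with heq | hadj
    · left; left
      have h1 : h * q.1.1 = q.2.1 := congrArg Prod.fst heq
      rw [← h1]; group
    · rcases hadj with ⟨_, h2⟩ | ⟨_, h2⟩
      · left; right
        refine ⟨_, h2, ?_⟩
        simp only [τ]
        group
      · right
        refine ⟨_, h2, ?_⟩
        simp only [τ]
        group
  exact Set.Finite.subset (Finset.finite_toSet _) this

lemma exists_good_h [Infinite Γ₁] (dec : ℕ → Finset (Γ₁ × ℕ))
    (F : Finset ((Γ₁ × ℕ) × (Γ₁ × ℕ))) :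
    ∃ h : Γ₁, ∀ q ∈ F, τ h q.1 ≠ q.2 ∧ ¬ (gx dec).Adj (τ h q.1) q.2 := by
  have hfin := star_finite dec F
  have : {h : Γ₁ | ∃ q ∈ F, τ h q.1 = q.2 ∨ (gx dec).Adj (τ h q.1) q.2} ≠ Set.univ := by
    intro hcon
    rw [hcon] at hfin
    exact Set.infinite_univ hfin
  obtain ⟨h, hh⟩ := Set.ne_univ_iff_exists_notMem _ |>.1 this
  refine ⟨h, fun q hq => ?_⟩
  simp only [Set.mem_setOf_eq] at hh
  push_neg at hh
  exact hh q hq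




section Words
variable {Γ₂ : Type*} [Group Γ₂]

def goodLetter : Γ₁ ⊕ Γ₂ → Prop
  | Sum.inl g => g ≠ 1
  | Sum.inr t => t ≠ 1

def altR : Γ₁ ⊕ Γ₂ → Γ₁ ⊕ Γ₂ → Prop := fun a b => a.isLeft ≠ b.isLeft

noncomputable def prodOf (l : List (Γ₁ ⊕ Γ₂)) : Monoid.Coprod Γ₁ Γ₂ :=
  (l.map (Sum.elim Monoid.Coprod.inl Monoid.Coprod.inr)).prod

lemma prodOf_nil : prodOf ([] : List (Γ₁ ⊕ Γ₂)) = 1 := rfl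

lemma prodOf_cons (ℓ : Γ₁ ⊕ Γ₂) (l : List (Γ₁ ⊕ Γ₂)) :
    prodOf (ℓ :: l) = Sum.elim Monoid.Coprod.inl Monoid.Coprod.inr ℓ * prodOf l := by
  simp [prodOf]

lemma prodOf_append (l₁ l₂ : List (Γ₁ ⊕ Γ₂)) :
    prodOf (l₁ ++ l₂) = prodOf l₁ * prodOf l₂ := by
  simp [prodOf]

lemma exists_prodOf (w : Monoid.Coprod Γ₁ Γ₂) : ∃ l, prodOf l = w := by
  induction w using Monoid.Coprod.induction_on with
  | inl m => exact ⟨[Sum.inl m], by simp [prodOf]⟩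
  | inr n => exact ⟨[Sum.inr n], by simp [prodOf]⟩
  | mul x y hx hy =>
    obtain ⟨l₁, h₁⟩ := hx
    obtain ⟨l₂, h₂⟩ := hy
    exact ⟨l₁ ++ l₂, by rw [prodOf_append, h₁, h₂]⟩

def oneLetter : Γ₁ ⊕ Γ₂ → Prop
  | Sum.inl g => g = 1
  | Sum.inr t => t = 1

noncomputable def push (ℓ : Γ₁ ⊕ Γ₂) (l : List (Γ₁ ⊕ Γ₂)) : List (Γ₁ ⊕ Γ₂) :=
  match l with
  | [] => [ℓ]
  | ℓ' :: r =>
    match ℓ, ℓ' with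
    | Sum.inl g, Sum.inl g' => if g * g' = 1 then r else Sum.inl (g * g') :: r
    | Sum.inr t, Sum.inr t' => if t * t' = 1 then r else Sum.inr (t * t') :: r
    | Sum.inl g, Sum.inr t' => Sum.inl g :: Sum.inr t' :: r
    | Sum.inr t, Sum.inl g' => Sum.inr t :: Sum.inl g' :: r

noncomputable def norm : List (Γ₁ ⊕ Γ₂) → List (Γ₁ ⊕ Γ₂)
  | [] => []
  | ℓ :: r => if oneLetter ℓ then norm r else push ℓ (norm r)

def Good' (l : List (Γ₁ ⊕ Γ₂)) : Prop :=
  List.Chain' altR l ∧ ∀ ℓ ∈ l, goodLetter ℓ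

lemma good'_nil : Good' ([] : List (Γ₁ ⊕ Γ₂)) := ⟨List.isChain_nil, by simp⟩

lemma good'_tail {ℓ : Γ₁ ⊕ Γ₂} {l : List (Γ₁ ⊕ Γ₂)} (h : Good' (ℓ :: l)) : Good' l :=
  ⟨h.1.tail, fun ℓ' h' => h.2 ℓ' (List.mem_cons_of_mem _ h')⟩

lemma push_good {ℓ : Γ₁ ⊕ Γ₂} {l : List (Γ₁ ⊕ Γ₂)} (hℓ : goodLetter ℓ) (hl : Good' l) :
    Good' (push ℓ l) := by
  match l with
  | [] =>
    refine ⟨List.isChain_singleton _, ?_⟩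
    intro ℓ' h
    simp only [push, List.mem_singleton] at h
    rw [h]; exact hℓ
  | ℓ' :: r =>
    have hrel := List.isChain_cons.1 hl.1
    match ℓ, ℓ' with
    | Sum.inl g, Sum.inl g' =>
      simp only [push]
      by_cases hone : g * g' = 1
      · rw [if_pos hone]
        exact good'_tail hl
      · rw [if_neg hone]
        refine ⟨List.isChain_cons.2 ⟨?_, hrel.2⟩, ?_⟩
        · intro h hh
          have := hrel.1 h hh
          exact this
        · intro ℓ₂ h₂
          rcases List.mem_cons.1 h₂ with h₂ | h₂
          · rw [h₂]; exact hone
          · exact hl.2 ℓ₂ (List.mem_cons_of_mem _ h₂)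
    | Sum.inr t, Sum.inr t' =>
      simp only [push]
      by_cases hone : t * t' = 1
      · rw [if_pos hone]
        exact good'_tail hl
      · rw [if_neg hone]
        refine ⟨List.isChain_cons.2 ⟨?_, hrel.2⟩, ?_⟩
        · intro h hh
          have := hrel.1 h hh
          exact this
        · intro ℓ₂ h₂
          rcases List.mem_cons.1 h₂ with h₂ | h₂
          · rw [h₂]; exact hone
          · exact hl.2 ℓ₂ (List.mem_cons_of_mem _ h₂)
    | Sum.inl g, Sum.inr t' =>
      refine ⟨List.isChain_cons_cons.2 ⟨by simp [altR], hl.1⟩, ?_⟩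
      intro ℓ₂ h₂
      rcases List.mem_cons.1 h₂ with h₂ | h₂
      · rw [h₂]; exact hℓ
      · exact hl.2 ℓ₂ h₂
    | Sum.inr t, Sum.inl g' =>
      refine ⟨List.isChain_cons_cons.2 ⟨by simp [altR], hl.1⟩, ?_⟩
      intro ℓ₂ h₂
      rcases List.mem_cons.1 h₂ with h₂ | h₂
      · rw [h₂]; exact hℓ
      · exact hl.2 ℓ₂ h₂

lemma push_prod (ℓ : Γ₁ ⊕ Γ₂) (l : List (Γ₁ ⊕ Γ₂)) :
    prodOf (push ℓ l) = Sum.elim Monoid.Coprod.inl Monoid.Coprod.inr ℓ * prodOf l := by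
  match l with
  | [] => simp [push, prodOf]
  | ℓ' :: r =>
    match ℓ, ℓ' with
    | Sum.inl g, Sum.inl g' =>
      simp only [push]
      by_cases hone : g * g' = 1
      · rw [if_pos hone, prodOf_cons]
        simp only [Sum.elim_inl]
        rw [← mul_assoc, ← map_mul, hone, map_one, one_mul]
      · rw [if_neg hone, prodOf_cons, prodOf_cons]
        simp only [Sum.elim_inl]
        rw [← mul_assoc, ← map_mul]
    | Sum.inr t, Sum.inr t' =>
      simp only [push]
      by_cases hone : t * t' = 1
      · rw [if_pos hone, prodOf_cons]
        simp only [Sum.elim_inr]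
        rw [← mul_assoc, ← map_mul, hone, map_one, one_mul]
      · rw [if_neg hone, prodOf_cons, prodOf_cons]
        simp only [Sum.elim_inr]
        rw [← mul_assoc, ← map_mul]
    | Sum.inl g, Sum.inr t' => simp [push, prodOf_cons]
    | Sum.inr t, Sum.inl g' => simp [push, prodOf_cons]

lemma norm_good (l : List (Γ₁ ⊕ Γ₂)) : Good' (norm l) := by
  induction l with
  | nil => exact good'_nil
  | cons ℓ r ih =>
    simp only [norm]
    by_cases hone : oneLetter ℓ
    · rw [if_pos hone]; exact ih
    · rw [if_neg hone]
      refine push_good ?_ ih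
      cases ℓ with
      | inl g => exact hone
      | inr t => exact hone

lemma norm_prod (l : List (Γ₁ ⊕ Γ₂)) : prodOf (norm l) = prodOf l := by
  induction l with
  | nil => rfl
  | cons ℓ r ih =>
    simp only [norm]
    by_cases hone : oneLetter ℓ
    · rw [if_pos hone, prodOf_cons, ih]
      cases ℓ with
      | inl g => rw [hone]; simp
      | inr t => rw [hone]; simp
    · rw [if_neg hone, push_prod, ih, prodOf_cons]

lemma exists_good_word (w : Monoid.Coprod Γ₁ Γ₂) (hw : w ≠ 1) :
    ∃ l : List (Γ₁ ⊕ Γ₂), l ≠ [] ∧ List.Chain' altR l ∧ (∀ ℓ ∈ l, goodLetter ℓ) ∧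
      prodOf l = w := by
  obtain ⟨l₀, hl₀⟩ := exists_prodOf w
  refine ⟨norm l₀, ?_, (norm_good l₀).1, (norm_good l₀).2, by rw [norm_prod, hl₀]⟩
  intro hcon
  rw [← hl₀, ← norm_prod, hcon] at hw
  exact hw rfl

lemma altR_rev {l : List (Γ₁ ⊕ Γ₂)} (h : List.Chain' altR l) :
    List.Chain' altR l.reverse := by
  rw [List.Chain', List.isChain_reverse]
  refine h.imp ?_
  intro a b hab
  exact hab.symm


end Words

section States


variable {Γ₂ : Type*} [Group Γ₂] {V : Type*}

/-- finite approximation states -/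
structure St (R : SimpleGraph V) (dec : ℕ → Finset (Γ₁ × ℕ)) : Type _ where
  P : Finset ((Γ₁ × ℕ) × V)
  B : Finset V
  μ : Γ₂ → V → V
  hP₁ : ∀ p ∈ P, ∀ q ∈ P, ((p : (Γ₁ × ℕ) × V).1 = q.1 ↔ p.2 = q.2)
  hP₂ : ∀ p ∈ P, ∀ q ∈ P, ((gx dec).Adj p.1 q.1 ↔ R.Adj p.2 q.2)
  hBμ : ∀ t : Γ₂, ∀ v ∈ B, μ t v ∈ B
  hμ1 : ∀ v ∈ B, μ 1 v = v
  hμm : ∀ s t : Γ₂, ∀ v ∈ B, μ (s * t) v = μ s (μ t v)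
  hμA : ∀ t : Γ₂, ∀ v ∈ B, ∀ w ∈ B, (R.Adj (μ t v) (μ t w) ↔ R.Adj v w)

variable {R : SimpleGraph V} {dec : ℕ → Finset (Γ₁ × ℕ)}

noncomputable def St.dom (S : St (Γ₂ := Γ₂) R dec) : Finset (Γ₁ × ℕ) := S.P.image Prod.fst
noncomputable def St.ran (S : St (Γ₂ := Γ₂) R dec) : Finset V := S.P.image Prod.snd

lemma St.mem_dom {S : St (Γ₂ := Γ₂) R dec} {x : Γ₁ × ℕ} :
    x ∈ S.dom ↔ ∃ q ∈ S.P, q.1 = x := by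
  simp [St.dom, eq_comm]

lemma St.mem_ran {S : St (Γ₂ := Γ₂) R dec} {a : V} :
    a ∈ S.ran ↔ ∃ q ∈ S.P, q.2 = a := by
  simp [St.ran, eq_comm]

lemma St.μ_injOn (S : St (Γ₂ := Γ₂) R dec) (t : Γ₂) {v w : V} (hv : v ∈ S.B) (hw : w ∈ S.B)
    (h : S.μ t v = S.μ t w) : v = w := by
  have h1 : S.μ t⁻¹ (S.μ t v) = S.μ t⁻¹ (S.μ t w) := by rw [h]
  rwa [← S.hμm _ _ _ hv, ← S.hμm _ _ _ hw, inv_mul_cancel, S.hμ1 _ hv, S.hμ1 _ hw] at h1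

/-- extension of states -/
def Ext (S S' : St (Γ₂ := Γ₂) R dec) : Prop :=
  S.P ⊆ S'.P ∧ S.B ⊆ S'.B ∧ ∀ t : Γ₂, ∀ v ∈ S.B, S'.μ t v = S.μ t v

lemma Ext.refl (S : St (Γ₂ := Γ₂) R dec) : Ext S S := ⟨le_refl _, le_refl _, fun _ _ _ => rfl⟩

lemma Ext.trans {S₁ S₂ S₃ : St (Γ₂ := Γ₂) R dec} (h₁ : Ext S₁ S₂) (h₂ : Ext S₂ S₃) :
    Ext S₁ S₃ := by
  refine ⟨h₁.1.trans h₂.1, h₁.2.1.trans h₂.2.1, fun t v hv => ?_⟩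
  rw [h₂.2.2 t v (h₁.2.1 hv), h₁.2.2 t v hv]

lemma Ext.dom_subset {S S' : St (Γ₂ := Γ₂) R dec} (h : Ext S S') : S.dom ⊆ S'.dom :=
  Finset.image_subset_image h.1

lemma Ext.ran_subset {S S' : St (Γ₂ := Γ₂) R dec} (h : Ext S S') : S.ran ⊆ S'.ran :=
  Finset.image_subset_image h.1

/-- adding one pair to `P` -/
lemma addPair (S : St (Γ₂ := Γ₂) R dec) {x : Γ₁ × ℕ} {a : V}
    (hx : x ∉ S.dom) (ha : a ∉ S.ran)
    (hm : ∀ q ∈ S.P, ((gx dec).Adj x q.1 ↔ R.Adj a q.2)) :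
    ∃ S' : St (Γ₂ := Γ₂) R dec, Ext S S' ∧ S'.P = insert (x, a) S.P ∧ S'.B = S.B ∧ S'.μ = S.μ := by
  have hx' : ∀ q ∈ S.P, q.1 ≠ x := by
    intro q hq hcon; exact hx (St.mem_dom.2 ⟨q, hq, hcon⟩)
  have ha' : ∀ q ∈ S.P, q.2 ≠ a := by
    intro q hq hcon; exact ha (St.mem_ran.2 ⟨q, hq, hcon⟩)
  refine ⟨⟨insert (x, a) S.P, S.B, S.μ, ?_, ?_, S.hBμ, S.hμ1, S.hμm, S.hμA⟩,
    ⟨Finset.subset_insert _ _, le_refl _, fun _ _ _ => rfl⟩, rfl, rfl, rfl⟩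
  · intro p hp q hq
    rcases Finset.mem_insert.1 hp with rfl | hp <;> rcases Finset.mem_insert.1 hq with rfl | hq
    · simp
    · simp only []
      constructor
      · intro h; exact absurd h.symm (hx' q hq)
      · intro h; exact absurd h.symm (ha' q hq)
    · simp only []
      constructor
      · intro h; exact absurd h (hx' p hp)
      · intro h; exact absurd h (ha' p hp)
    · exact S.hP₁ p hp q hq
  · intro p hp q hq
    rcases Finset.mem_insert.1 hp with rfl | hp <;> rcases Finset.mem_insert.1 hq with rfl | hq
    · simp
    · exact hm q hq
    · rw [(gx dec).adj_comm, R.adj_comm]; exact hm p hp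
    · exact S.hP₂ p hp q hq

/-- choose a fresh target in `V` mirroring `x`'s pattern -/
lemma freshTarget (hR : R.HasPropR) (S : St (Γ₂ := Γ₂) R dec) (x : Γ₁ × ℕ) (E : Finset V) :
    ∃ a : V, a ∉ E ∧ a ∉ S.ran ∧
      (∀ q ∈ S.P, (R.Adj a q.2 ↔ (gx dec).Adj x q.1)) ∧
      (∀ w ∈ E, w ∉ S.ran → ¬ R.Adj a w) := by
  set U : Finset V := (S.P.filter fun q => (gx dec).Adj x q.1).image Prod.snd with hU
  obtain ⟨a, haU, haW, hadj, hnadj⟩ := hR U ((S.ran ∪ E) \ U) (Finset.disjoint_sdiff)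
  have hUr : U ⊆ S.ran := Finset.image_subset_image (Finset.filter_subset _ _)
  have hnotin : ∀ w, w ∈ S.ran ∪ E → w ∉ U → ¬ R.Adj a w := by
    intro w hw hwU
    exact hnadj w (Finset.mem_sdiff.2 ⟨hw, hwU⟩)
  refine ⟨a, ?_, ?_, ?_, ?_⟩
  · intro hcon
    by_cases hU' : a ∈ U
    · exact haU hU'
    · exact haW (Finset.mem_sdiff.2 ⟨Finset.mem_union_right _ hcon, hU'⟩)
  · intro hcon
    by_cases hU' : a ∈ U
    · exact haU hU'
    · exact haW (Finset.mem_sdiff.2 ⟨Finset.mem_union_left _ hcon, hU'⟩)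
  · intro q hq
    constructor
    · intro hadj'
      by_contra hcon
      have hqU : q.2 ∉ U := by
        intro hmem
        obtain ⟨q', hq', hq'2⟩ := Finset.mem_image.1 hmem
        have hq'P := Finset.mem_filter.1 hq'
        have heq : q'.1 = q.1 := (S.hP₁ q' hq'P.1 q hq).2 hq'2
        exact hcon (heq ▸ hq'P.2)
      exact hnotin q.2 (Finset.mem_union_left _ (St.mem_ran.2 ⟨q, hq, rfl⟩)) hqU hadj'
    · intro hadj'
      exact hadj q.2 (Finset.mem_image.2 ⟨q, Finset.mem_filter.2 ⟨hq, hadj'⟩, rfl⟩)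
  · intro w hw hwr
    have hwU : w ∉ U := fun hmem => hwr (hUr hmem)
    exact hnotin w (Finset.mem_union_right _ hw) hwU

/-- choose a fresh source in `Γ₁ × ℕ` mirroring `a`'s pattern -/
lemma freshSource (hRX : (gx dec).HasPropR) (S : St (Γ₂ := Γ₂) R dec) (a : V)
    (E : Finset (Γ₁ × ℕ)) :
    ∃ x : Γ₁ × ℕ, x ∉ E ∧ x ∉ S.dom ∧
      (∀ q ∈ S.P, ((gx dec).Adj x q.1 ↔ R.Adj a q.2)) ∧
      (∀ w ∈ E, w ∉ S.dom → ¬ (gx dec).Adj x w) := by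
  set U : Finset (Γ₁ × ℕ) := (S.P.filter fun q => R.Adj a q.2).image Prod.fst with hU
  obtain ⟨x, hxU, hxW, hadj, hnadj⟩ := hRX U ((S.dom ∪ E) \ U) (Finset.disjoint_sdiff)
  have hUr : U ⊆ S.dom := Finset.image_subset_image (Finset.filter_subset _ _)
  have hnotin : ∀ w, w ∈ S.dom ∪ E → w ∉ U → ¬ (gx dec).Adj x w := by
    intro w hw hwU
    exact hnadj w (Finset.mem_sdiff.2 ⟨hw, hwU⟩)
  refine ⟨x, ?_, ?_, ?_, ?_⟩
  · intro hcon
    by_cases hU' : x ∈ U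
    · exact hxU hU'
    · exact hxW (Finset.mem_sdiff.2 ⟨Finset.mem_union_right _ hcon, hU'⟩)
  · intro hcon
    by_cases hU' : x ∈ U
    · exact hxU hU'
    · exact hxW (Finset.mem_sdiff.2 ⟨Finset.mem_union_left _ hcon, hU'⟩)
  · intro q hq
    constructor
    · intro hadj'
      by_contra hcon
      have hqU : q.1 ∉ U := by
        intro hmem
        obtain ⟨q', hq', hq'1⟩ := Finset.mem_image.1 hmem
        have hq'P := Finset.mem_filter.1 hq'
        have := (S.hP₁ q' hq'P.1 q hq).1 hq'1
        exact hcon (this ▸ hq'P.2)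
      exact hnotin q.1 (Finset.mem_union_left _ (St.mem_dom.2 ⟨q, hq, rfl⟩)) hqU hadj'
    · intro hadj'
      exact hadj q.1 (Finset.mem_image.2 ⟨q, Finset.mem_filter.2 ⟨hq, hadj'⟩, rfl⟩)
  · intro w hw hwr
    have hwU : w ∉ U := fun hmem => hwr (hUr hmem)
    exact hnotin w (Finset.mem_union_right _ hw) hwU

/-- ensure a vertex is in the range of `P` -/
lemma ensureRan (hRX : (gx dec).HasPropR) (S : St (Γ₂ := Γ₂) R dec) (a : V) :
    ∃ S' : St (Γ₂ := Γ₂) R dec, Ext S S' ∧ a ∈ S'.ran ∧ S'.B = S.B ∧ S'.μ = S.μ := by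
  by_cases ha : a ∈ S.ran
  · exact ⟨S, Ext.refl S, ha, rfl, rfl⟩
  · obtain ⟨x, _, hxd, hm, _⟩ := freshSource hRX S a ∅
    obtain ⟨S', hext, hP, hB, hμ⟩ := addPair S hxd ha hm
    refine ⟨S', hext, ?_, hB, hμ⟩
    rw [St.mem_ran]
    exact ⟨(x, a), by rw [hP]; exact Finset.mem_insert_self _ _, rfl⟩

/-- ensure finitely many vertices are in the range of `P` -/
lemma ensureRanAll (hRX : (gx dec).HasPropR) (S : St (Γ₂ := Γ₂) R dec) (D : Finset V) :
    ∃ S' : St (Γ₂ := Γ₂) R dec, Ext S S' ∧ (∀ a ∈ D, a ∈ S'.ran) ∧ S'.B = S.B ∧ S'.μ = S.μ := by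
  induction D using Finset.induction_on with
  | empty => exact ⟨S, Ext.refl S, by simp, rfl, rfl⟩
  | @insert a D ha ih =>
    obtain ⟨S₁, h₁, hD, hB₁, hμ₁⟩ := ih
    obtain ⟨S₂, h₂, haS, hB₂, hμ₂⟩ := ensureRan hRX S₁ a
    refine ⟨S₂, h₁.trans h₂, ?_, by rw [hB₂, hB₁], by rw [hμ₂, hμ₁]⟩
    intro b hb
    rcases Finset.mem_insert.1 hb with rfl | hb
    · exact haS
    · exact h₂.ran_subset (hD b hb)

/-- ensure a vertex is in the domain of `P` -/
lemma ensureDom (hR : R.HasPropR) (S : St (Γ₂ := Γ₂) R dec) (x : Γ₁ × ℕ) :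
    ∃ S' : St (Γ₂ := Γ₂) R dec, Ext S S' ∧ x ∈ S'.dom ∧ S'.B = S.B ∧ S'.μ = S.μ := by
  by_cases hx : x ∈ S.dom
  · exact ⟨S, Ext.refl S, hx, rfl, rfl⟩
  · obtain ⟨a, _, har, hm, _⟩ := freshTarget hR S x ∅
    have hm' : ∀ q ∈ S.P, ((gx dec).Adj x q.1 ↔ R.Adj a q.2) := fun q hq => (hm q hq).symm
    obtain ⟨S', hext, hP, hB, hμ⟩ := addPair S hx har hm'
    refine ⟨S', hext, ?_, hB, hμ⟩
    rw [St.mem_dom]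
    exact ⟨(x, a), by rw [hP]; exact Finset.mem_insert_self _ _, rfl⟩


/-- invariant for partial orbit families -/
def OrbInv (S : St (Γ₂ := Γ₂) R dec) (v : V) (M E : Finset V) (ex : Finset Γ₂)
    (f : Γ₂ → V) (T : Finset Γ₂) : Prop :=
  (∀ s ∈ T, ∀ s' ∈ T, s ≠ s' → f s ≠ f s' ∧ ¬ R.Adj (f s) (f s')) ∧
  (∀ s ∈ T, s ≠ 1 → f s ∉ S.B ∧ f s ∉ S.ran ∧ f s ∉ M ∧ f s ∉ E) ∧
  (∀ s ∈ T, ∀ b ∈ S.B, (R.Adj (f s) b ↔ R.Adj v (S.μ s⁻¹ b))) ∧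
  (∀ s ∈ T, s ≠ 1 → ∀ m ∈ M, ¬ R.Adj (f s) m) ∧
  (∀ s ∈ T, s ≠ 1 → s ∉ ex → ∀ w ∈ S.ran, w ∉ S.B → ¬ R.Adj (f s) w)

lemma extendFam (hR : R.HasPropR) (S : St (Γ₂ := Γ₂) R dec) (v : V) (M E : Finset V)
    (ex : Finset Γ₂) (hv : v ∉ S.B) (hMB : ∀ m ∈ M, m ∉ S.B)
    (D : Finset Γ₂) :
    ∀ (T : Finset Γ₂) (f : Γ₂ → V), Disjoint D T → (1 : Γ₂) ∈ T → f 1 = v →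
    OrbInv S v M E ex f T →
    ∃ g : Γ₂ → V, (∀ s ∈ T, g s = f s) ∧ OrbInv S v M E ex g (T ∪ D) := by
  induction D using Finset.induction_on with
  | empty =>
    intro T f _ _ _ hInv
    exact ⟨f, fun s _ => rfl, by simpa using hInv⟩
  | @insert a D ha ih =>
    intro T f hdisj h1T hf1 hInv
    have haT : a ∉ T := by
      have := Finset.disjoint_left.1 hdisj (Finset.mem_insert_self a D)
      exact this
    have ha1 : a ≠ 1 := fun h => haT (by rw [h]; exact h1T)
    -- choose the new point
    set U : Finset V := S.B.filter (fun b => R.Adj v (S.μ a⁻¹ b)) with hU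
    set Wbig : Finset V := S.B ∪ S.ran ∪ M ∪ E ∪ T.image f ∪ {v} with hWbig
    obtain ⟨z, hzU, hzW, hadj, hnadj⟩ := hR U (Wbig \ U) Finset.disjoint_sdiff
    have hUB : U ⊆ S.B := Finset.filter_subset _ _
    have hbig : ∀ w ∈ Wbig, w ∉ U → ¬ R.Adj z w := by
      intro w hw hwU
      exact hnadj w (Finset.mem_sdiff.2 ⟨hw, hwU⟩)
    have hzbig : z ∉ Wbig := by
      intro hcon
      by_cases h : z ∈ U
      · exact hzU h
      · exact hzW (Finset.mem_sdiff.2 ⟨hcon, h⟩)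
    have hzB : z ∉ S.B := fun h => hzbig (by simp [hWbig, h])
    have hzran : z ∉ S.ran := fun h => hzbig (by simp [hWbig, h])
    have hzM : z ∉ M := fun h => hzbig (by simp [hWbig, h])
    have hzE : z ∉ E := fun h => hzbig (by simp [hWbig, h])
    have hsub5 : T.image f ⊆ Wbig := by
      intro w hw; simp only [hWbig, Finset.mem_union]; tauto
    have hzT : ∀ s ∈ T, z ≠ f s := by
      intro s hs hcon
      exact hzbig (hsub5 (by rw [hcon]; exact Finset.mem_image_of_mem f hs))
    have hzrule : ∀ b ∈ S.B, (R.Adj z b ↔ R.Adj v (S.μ a⁻¹ b)) := by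
      intro b hb
      constructor
      · intro h
        by_contra hcon
        have hbU : b ∉ U := by
          intro hmem
          exact hcon (Finset.mem_filter.1 hmem).2
        exact hbig b (by simp [hWbig, hb]) hbU h
      · intro h
        exact hadj b (Finset.mem_filter.2 ⟨hb, h⟩)
    have hzMadj : ∀ m ∈ M, ¬ R.Adj z m := by
      intro m hm
      have : m ∉ U := fun h => hMB m hm (hUB h)
      exact hbig m (by simp [hWbig, hm]) this
    have hzTadj : ∀ s ∈ T, ¬ R.Adj z (f s) := by
      intro s hs
      have hfU : f s ∉ U := by
        intro h
        by_cases hs1 : s = 1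
        · rw [hs1, hf1] at h; exact hv (hUB h)
        · exact (hInv.2.1 s hs hs1).1 (hUB h)
      exact hbig (f s) (hsub5 (Finset.mem_image_of_mem f hs)) hfU
    -- new family
    set g₀ : Γ₂ → V := Function.update f a z with hg₀
    have hg₀T : ∀ s ∈ T, g₀ s = f s := by
      intro s hs
      exact Function.update_of_ne (fun h => haT (by rw [← h]; exact hs)) _ _
    have hg₀a : g₀ a = z := Function.update_self _ _ _
    have hzranadj : ∀ w ∈ S.ran, w ∉ S.B → ¬ R.Adj z w := by
      intro w hw hwB
      have hwU : w ∉ U := fun h => hwB (hUB h)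
      exact hbig w (by simp only [hWbig, Finset.mem_union]; tauto) hwU
    have hInv' : OrbInv S v M E ex g₀ (insert a T) := by
      refine ⟨?_, ?_, ?_, ?_, ?_⟩
      · intro s hs s' hs' hss
        rcases Finset.mem_insert.1 hs with heq | hs <;> rcases Finset.mem_insert.1 hs' with heq' | hs'
        · exact absurd (heq.trans heq'.symm) hss
        · rw [heq, hg₀a, hg₀T s' hs']
          exact ⟨hzT s' hs', hzTadj s' hs'⟩
        · rw [heq', hg₀a, hg₀T s hs]
          exact ⟨fun h => hzT s hs h.symm, fun h => hzTadj s hs h.symm⟩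
        · rw [hg₀T s hs, hg₀T s' hs']
          exact hInv.1 s hs s' hs' hss
      · intro s hs hs1
        rcases Finset.mem_insert.1 hs with heq | hs
        · rw [heq, hg₀a]; exact ⟨hzB, hzran, hzM, hzE⟩
        · rw [hg₀T s hs]; exact hInv.2.1 s hs hs1
      · intro s hs b hb
        rcases Finset.mem_insert.1 hs with heq | hs
        · rw [heq, hg₀a]
          exact hzrule b hb
        · rw [hg₀T s hs]; exact hInv.2.2.1 s hs b hb
      · intro s hs hs1 m hm
        rcases Finset.mem_insert.1 hs with heq | hs
        · rw [heq, hg₀a]; exact hzMadj m hm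
        · rw [hg₀T s hs]; exact hInv.2.2.2.1 s hs hs1 m hm
      · intro s hs hs1 hsex w hw hwB
        rcases Finset.mem_insert.1 hs with heq | hs
        · rw [heq, hg₀a]; exact hzranadj w hw hwB
        · rw [hg₀T s hs]; exact hInv.2.2.2.2 s hs hs1 hsex w hw hwB
    have hdisj' : Disjoint D (insert a T) := by
      rw [Finset.disjoint_insert_right]
      exact ⟨ha, (Finset.disjoint_insert_left.1 hdisj).2⟩
    have h1T' : (1 : Γ₂) ∈ insert a T := Finset.mem_insert_of_mem h1T
    have hg₀1 : g₀ 1 = v := by rw [hg₀T 1 h1T, hf1]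
    obtain ⟨g, hgT, hgInv⟩ := ih (insert a T) g₀ hdisj' h1T' hg₀1 hInv'
    refine ⟨g, ?_, ?_⟩
    · intro s hs
      rw [hgT s (Finset.mem_insert_of_mem hs), hg₀T s hs]
    · have : insert a T ∪ D = T ∪ insert a D := by
        ext x
        simp only [Finset.mem_union, Finset.mem_insert]
        tauto
      rwa [this] at hgInv


variable [Fintype Γ₂]

lemma orbitAssemble (S : St (Γ₂ := Γ₂) R dec) (v : V)
    (z : Γ₂ → V) (hzinj : Function.Injective z)
    (hzB : ∀ u : Γ₂, z u ∉ S.B)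
    (hpair : ∀ u u' : Γ₂, u ≠ u' → ¬ R.Adj (z u) (z u'))
    (hrule : ∀ u : Γ₂, ∀ b ∈ S.B, (R.Adj (z u) b ↔ R.Adj v (S.μ u⁻¹ b))) :
    ∃ S' : St (Γ₂ := Γ₂) R dec, Ext S S' ∧ S'.P = S.P ∧
      S'.B = S.B ∪ Finset.image z Finset.univ ∧ (∀ t u, S'.μ t (z u) = z (t * u)) := by
  set orb := Finset.image z Finset.univ with horb
  have hmemz : ∀ u : Γ₂, z u ∈ orb := fun u => Finset.mem_image_of_mem _ (Finset.mem_univ u)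
  have horbB : ∀ b ∈ S.B, b ∉ orb := by
    intro b hb hcon
    obtain ⟨u, _, hu⟩ := Finset.mem_image.1 hcon
    exact hzB u (hu ▸ hb)
  set μ' : Γ₂ → V → V := fun t a => if h : a ∈ orb then z (t * Function.invFun z a) else S.μ t a
    with hμ'
  have hμ'z : ∀ t u, μ' t (z u) = z (t * u) := by
    intro t u
    simp only [hμ', dif_pos (hmemz u)]
    rw [Function.leftInverse_invFun hzinj u]
  have hμ'old : ∀ (t : Γ₂), ∀ b ∈ S.B, μ' t b = S.μ t b := by
    intro t b hb
    simp only [hμ', dif_neg (horbB b hb)]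
  have hcases : ∀ a ∈ S.B ∪ orb, (a ∈ S.B ∧ a ∉ orb) ∨ ∃ u, z u = a := by
    intro a ha
    rcases Finset.mem_union.1 ha with h | h
    · exact Or.inl ⟨h, horbB a h⟩
    · obtain ⟨u, _, hu⟩ := Finset.mem_image.1 h
      exact Or.inr ⟨u, hu⟩
  refine ⟨⟨S.P, S.B ∪ orb, μ', S.hP₁, S.hP₂, ?_, ?_, ?_, ?_⟩,
    ⟨le_refl _, Finset.subset_union_left, fun t b hb => hμ'old t b hb⟩, rfl, rfl, hμ'z⟩
  · -- hBμ
    intro t a ha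
    rcases hcases a ha with ⟨hB, _⟩ | ⟨u, hu⟩
    · rw [hμ'old t a hB]
      exact Finset.mem_union_left _ (S.hBμ t a hB)
    · rw [← hu, hμ'z]
      exact Finset.mem_union_right _ (hmemz _)
  · -- hμ1
    intro a ha
    rcases hcases a ha with ⟨hB, _⟩ | ⟨u, hu⟩
    · rw [hμ'old 1 a hB]; exact S.hμ1 a hB
    · rw [← hu, hμ'z, one_mul]
  · -- hμm
    intro s t a ha
    rcases hcases a ha with ⟨hB, _⟩ | ⟨u, hu⟩
    · rw [hμ'old t a hB, hμ'old (s * t) a hB, hμ'old s _ (S.hBμ t a hB), S.hμm s t a hB]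
    · rw [← hu, hμ'z, hμ'z, hμ'z, mul_assoc]
  · -- hμA
    intro t a ha b hb
    rcases hcases a ha with ⟨haB, _⟩ | ⟨u, hu⟩ <;> rcases hcases b hb with ⟨hbB, _⟩ | ⟨u', hu'⟩
    · rw [hμ'old t a haB, hμ'old t b hbB]
      exact S.hμA t a haB b hbB
    · rw [← hu', hμ'old t a haB, hμ'z]
      rw [R.adj_comm (S.μ t a) (z (t * u')), R.adj_comm a (z u')]
      rw [hrule (t * u') _ (S.hBμ t a haB), hrule u' a haB]
      rw [mul_inv_rev, S.hμm u'⁻¹ t⁻¹ _ (S.hBμ t a haB), ← S.hμm t⁻¹ t a haB,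
        inv_mul_cancel, S.hμ1 a haB]
    · rw [← hu, hμ'old t b hbB, hμ'z]
      rw [hrule (t * u) _ (S.hBμ t b hbB), hrule u b hbB]
      rw [mul_inv_rev, S.hμm u⁻¹ t⁻¹ _ (S.hBμ t b hbB), ← S.hμm t⁻¹ t b hbB,
        inv_mul_cancel, S.hμ1 b hbB]
    · rw [← hu, ← hu', hμ'z, hμ'z]
      by_cases huu : u = u'
      · rw [huu]
        exact iff_of_false (R.irrefl) (R.irrefl)
      · exact iff_of_false (hpair _ _ (fun h => huu (mul_left_cancel h))) (hpair u u' huu)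

/-- creating a free orbit through `v`, without pinning -/
lemma orbitFree (hR : R.HasPropR) (S : St (Γ₂ := Γ₂) R dec) (v : V) (hv : v ∉ S.B)
    (M E : Finset V) (hMB : ∀ m ∈ M, m ∉ S.B) :
    ∃ (S' : St (Γ₂ := Γ₂) R dec) (z : Γ₂ → V),
      Ext S S' ∧ z 1 = v ∧ Function.Injective z ∧ S'.P = S.P ∧
      S'.B = S.B ∪ Finset.image z Finset.univ ∧
      (∀ t u, S'.μ t (z u) = z (t * u)) ∧
      (∀ s : Γ₂, s ≠ 1 → z s ∉ S.B ∧ z s ∉ S.ran ∧ z s ∉ M ∧ z s ∉ E) ∧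
      (∀ s : Γ₂, s ≠ 1 → ∀ m ∈ M, ¬ R.Adj (z s) m) ∧
      (∀ s s' : Γ₂, s ≠ s' → ¬ R.Adj (z s) (z s')) ∧
      (∀ s : Γ₂, ∀ b ∈ S.B, (R.Adj (z s) b ↔ R.Adj v (S.μ s⁻¹ b))) ∧
      (∀ s : Γ₂, s ≠ 1 → ∀ w ∈ S.ran, w ∉ S.B → ¬ R.Adj (z s) w) := by
  have hInv₀ : OrbInv S v M E ∅ (fun _ => v) {1} := by
    refine ⟨?_, ?_, ?_, ?_, ?_⟩
    · intro s hs s' hs' hss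
      rw [Finset.mem_singleton] at hs hs'
      exact absurd (hs.trans hs'.symm) hss
    · intro s hs hs1
      rw [Finset.mem_singleton] at hs
      exact absurd hs hs1
    · intro s hs b hb
      rw [Finset.mem_singleton] at hs
      rw [hs, inv_one, S.hμ1 b hb]
    · intro s hs hs1
      rw [Finset.mem_singleton] at hs
      exact absurd hs hs1
    · intro s hs hs1
      rw [Finset.mem_singleton] at hs
      exact absurd hs hs1
  obtain ⟨z, hzT, hzInv⟩ := extendFam hR S v M E ∅ hv hMB
    (Finset.univ \ {1}) {1} (fun _ => v) Finset.sdiff_disjoint (Finset.mem_singleton_self 1)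
    rfl hInv₀
  have huniv : ({1} : Finset Γ₂) ∪ (Finset.univ \ {1}) = Finset.univ := by
    rw [Finset.union_sdiff_of_subset (Finset.subset_univ _)]
  rw [huniv] at hzInv
  have hz1 : z 1 = v := hzT 1 (Finset.mem_singleton_self 1)
  have hzinj : Function.Injective z := by
    intro u u' h
    by_contra hne
    exact (hzInv.1 u (Finset.mem_univ u) u' (Finset.mem_univ u') hne).1 h
  have hzB : ∀ u : Γ₂, z u ∉ S.B := by
    intro u
    by_cases hu : u = 1
    · rw [hu, hz1]; exact hv
    · exact (hzInv.2.1 u (Finset.mem_univ u) hu).1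
  obtain ⟨S', hext, hP, hB, hμz⟩ := orbitAssemble S v z hzinj hzB
    (fun u u' h => (hzInv.1 u (Finset.mem_univ u) u' (Finset.mem_univ u') h).2)
    (fun u b hb => hzInv.2.2.1 u (Finset.mem_univ u) b hb)
  exact ⟨S', z, hext, hz1, hzinj, hP, hB, hμz,
    fun s hs => hzInv.2.1 s (Finset.mem_univ s) hs,
    fun s hs m hm => hzInv.2.2.2.1 s (Finset.mem_univ s) hs m hm,
    fun s s' h => (hzInv.1 s (Finset.mem_univ s) s' (Finset.mem_univ s') h).2,
    fun s b hb => hzInv.2.2.1 s (Finset.mem_univ s) b hb,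
    fun s hs w hw hwB => hzInv.2.2.2.2 s (Finset.mem_univ s) hs
      (Finset.notMem_empty s) w hw hwB⟩


/-- creating a free orbit through `v`, pinning the `t₀` point as image of `x'` -/
lemma orbitPin (hR : R.HasPropR) (S : St (Γ₂ := Γ₂) R dec) (v : V) (hv : v ∉ S.B)
    (t₀ : Γ₂) (ht₀ : t₀ ≠ 1) (M E : Finset V) (hMB : ∀ m ∈ M, m ∉ S.B)
    (x' : Γ₁ × ℕ) (hx'dom : x' ∉ S.dom)
    (hPC : ∀ q ∈ S.P, q.2 ∈ S.B → (R.Adj v (S.μ t₀⁻¹ q.2) ↔ (gx dec).Adj x' q.1))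
    (hPM : ∀ q ∈ S.P, (q.2 ∈ M ∨ q.2 = v) → ¬ (gx dec).Adj x' q.1) :
    ∃ (S' : St (Γ₂ := Γ₂) R dec) (z : Γ₂ → V),
      Ext S S' ∧ z 1 = v ∧ Function.Injective z ∧ S'.P = insert (x', z t₀) S.P ∧
      S'.B = S.B ∪ Finset.image z Finset.univ ∧
      (∀ t u, S'.μ t (z u) = z (t * u)) ∧
      (∀ s : Γ₂, s ≠ 1 → z s ∉ S.B ∧ z s ∉ S.ran ∧ z s ∉ M ∧ z s ∉ E) ∧
      (∀ s : Γ₂, s ≠ 1 → ∀ m ∈ M, ¬ R.Adj (z s) m) ∧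
      (∀ s s' : Γ₂, s ≠ s' → ¬ R.Adj (z s) (z s')) ∧
      (∀ s : Γ₂, ∀ b ∈ S.B, (R.Adj (z s) b ↔ R.Adj v (S.μ s⁻¹ b))) := by
  -- choose the pinned point n
  set U : Finset V := S.B.filter (fun b => R.Adj v (S.μ t₀⁻¹ b)) ∪
    (S.P.filter fun q => (gx dec).Adj x' q.1).image Prod.snd with hU
  set Wbig : Finset V := S.B ∪ S.ran ∪ M ∪ E ∪ {v} with hWbig
  obtain ⟨n, hnU, hnW, hadj, hnadj⟩ := hR U (Wbig \ U) Finset.disjoint_sdiff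
  have hUsub : U ⊆ S.B ∪ S.ran := by
    intro b hb
    rcases Finset.mem_union.1 hb with h | h
    · exact Finset.mem_union_left _ (Finset.filter_subset _ _ h)
    · refine Finset.mem_union_right _ ?_
      obtain ⟨q, hq, hq2⟩ := Finset.mem_image.1 h
      exact Finset.mem_image.2 ⟨q, (Finset.mem_filter.1 hq).1, hq2⟩
  have hbign : ∀ w ∈ Wbig, w ∉ U → ¬ R.Adj n w := by
    intro w hw hwU
    exact hnadj w (Finset.mem_sdiff.2 ⟨hw, hwU⟩)
  have hnbig : n ∉ Wbig := by
    intro hcon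
    by_cases h : n ∈ U
    · exact hnU h
    · exact hnW (Finset.mem_sdiff.2 ⟨hcon, h⟩)
  have hnB : n ∉ S.B := fun h => hnbig (by simp only [hWbig, Finset.mem_union]; tauto)
  have hnran : n ∉ S.ran := fun h => hnbig (by simp only [hWbig, Finset.mem_union]; tauto)
  have hnM : n ∉ M := fun h => hnbig (by simp only [hWbig, Finset.mem_union]; tauto)
  have hnE : n ∉ E := fun h => hnbig (by simp only [hWbig, Finset.mem_union]; tauto)
  have hnv : n ≠ v := fun h => hnbig (by
    simp only [hWbig, Finset.mem_union, Finset.mem_singleton]; tauto)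
  have hmirror : ∀ q ∈ S.P, (R.Adj n q.2 ↔ (gx dec).Adj x' q.1) := by
    intro q hq
    constructor
    · intro h
      by_contra hcon
      have hqU : q.2 ∉ U := by
        intro hmem
        rcases Finset.mem_union.1 hmem with hmem | hmem
        · have h1 := Finset.mem_filter.1 hmem
          exact hcon ((hPC q hq h1.1).1 h1.2)
        · obtain ⟨q', hq', hq'2⟩ := Finset.mem_image.1 hmem
          have hq'f := Finset.mem_filter.1 hq'
          have : q'.1 = q.1 := (S.hP₁ q' hq'f.1 q hq).2 hq'2
          exact hcon (this ▸ hq'f.2)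
      have hqran : q.2 ∈ Wbig := by
        have : q.2 ∈ S.ran := Finset.mem_image.2 ⟨q, hq, rfl⟩
        simp only [hWbig, Finset.mem_union]; tauto
      exact hbign q.2 hqran hqU h
    · intro h
      exact hadj q.2 (Finset.mem_union_right _
        (Finset.mem_image.2 ⟨q, Finset.mem_filter.2 ⟨hq, h⟩, rfl⟩))
  have hnrule : ∀ b ∈ S.B, (R.Adj n b ↔ R.Adj v (S.μ t₀⁻¹ b)) := by
    intro b hb
    constructor
    · intro h
      by_contra hcon
      have hbU : b ∉ U := by
        intro hmem
        rcases Finset.mem_union.1 hmem with hmem | hmem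
        · exact hcon (Finset.mem_filter.1 hmem).2
        · obtain ⟨q', hq', hq'2⟩ := Finset.mem_image.1 hmem
          have hq'f := Finset.mem_filter.1 hq'
          have hb' : q'.2 ∈ S.B := by rw [hq'2]; exact hb
          have hthis := (hPC q' hq'f.1 hb').2 hq'f.2
          rw [hq'2] at hthis
          exact hcon hthis
      exact hbign b (by simp only [hWbig, Finset.mem_union]; tauto) hbU h
    · intro h
      exact hadj b (Finset.mem_union_left _ (Finset.mem_filter.2 ⟨hb, h⟩))
  have hnMv : ∀ m, (m ∈ M ∨ m = v) → ¬ R.Adj n m := by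
    intro m hm
    have hmU : m ∉ U := by
      intro hmem
      rcases Finset.mem_union.1 hmem with hmem | hmem
      · have := Finset.filter_subset _ _ hmem
        rcases hm with hm | hm
        · exact hMB m hm this
        · rw [hm] at this; exact hv this
      · obtain ⟨q', hq', hq'2⟩ := Finset.mem_image.1 hmem
        have hq'f := Finset.mem_filter.1 hq'
        exact hPM q' hq'f.1 (by rw [hq'2]; exact hm) hq'f.2
    have : m ∈ Wbig := by
      rcases hm with hm | hm
      · simp only [hWbig, Finset.mem_union]; tauto
      · simp only [hWbig, Finset.mem_union, Finset.mem_singleton]; tauto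
    exact hbign m this hmU
  -- build the full orbit family
  have h1t₀ : (1 : Γ₂) ∉ ({t₀} : Finset Γ₂) := by
    rw [Finset.mem_singleton]; exact fun h => ht₀ h.symm
  set f₀ : Γ₂ → V := fun s => if s = t₀ then n else v with hf₀
  have hf₀1 : f₀ 1 = v := by
    have : (1 : Γ₂) ≠ t₀ := fun h => ht₀ h.symm
    simp only [hf₀, if_neg this]
  have hf₀t : f₀ t₀ = n := by simp only [hf₀, if_pos rfl]
  have hInv₀ : OrbInv S v M E {t₀} f₀ {1, t₀} := by
    have hval : ∀ s ∈ ({1, t₀} : Finset Γ₂), f₀ s = v ∧ s = 1 ∨ f₀ s = n ∧ s = t₀ := by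
      intro s hs
      rcases Finset.mem_insert.1 hs with h | h
      · left; exact ⟨by rw [h, hf₀1], h⟩
      · right; exact ⟨by rw [Finset.mem_singleton.1 h, hf₀t], Finset.mem_singleton.1 h⟩
    refine ⟨?_, ?_, ?_, ?_, ?_⟩
    · intro s hs s' hs' hss
      rcases hval s hs with ⟨hv1, he1⟩ | ⟨hv1, he1⟩ <;>
        rcases hval s' hs' with ⟨hv2, he2⟩ | ⟨hv2, he2⟩
      · exact absurd (he1.trans he2.symm) hss
      · rw [hv1, hv2]
        exact ⟨hnv.symm, fun h => hnMv v (Or.inr rfl) h.symm⟩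
      · rw [hv1, hv2]
        exact ⟨hnv, hnMv v (Or.inr rfl)⟩
      · exact absurd (he1.trans he2.symm) hss
    · intro s hs hs1
      rcases hval s hs with ⟨_, he1⟩ | ⟨hv1, _⟩
      · exact absurd he1 hs1
      · rw [hv1]; exact ⟨hnB, hnran, hnM, hnE⟩
    · intro s hs b hb
      rcases hval s hs with ⟨hv1, he1⟩ | ⟨hv1, he1⟩
      · rw [hv1, he1, inv_one, S.hμ1 b hb]
      · rw [hv1, he1]; exact hnrule b hb
    · intro s hs hs1 m hm
      rcases hval s hs with ⟨_, he1⟩ | ⟨hv1, _⟩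
      · exact absurd he1 hs1
      · rw [hv1]; exact hnMv m (Or.inl hm)
    · intro s hs hs1 hsex w hw hwB
      rcases hval s hs with ⟨_, he1⟩ | ⟨_, he1⟩
      · exact absurd he1 hs1
      · exact absurd (by rw [he1]; exact Finset.mem_singleton_self t₀) hsex
  obtain ⟨z, hzT, hzInv⟩ := extendFam hR S v M E {t₀} hv hMB
    (Finset.univ \ {1, t₀}) {1, t₀} f₀ Finset.sdiff_disjoint
    (Finset.mem_insert_self 1 {t₀}) hf₀1 hInv₀
  have huniv : ({1, t₀} : Finset Γ₂) ∪ (Finset.univ \ {1, t₀}) = Finset.univ := by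
    rw [Finset.union_sdiff_of_subset (Finset.subset_univ _)]
  rw [huniv] at hzInv
  have hz1 : z 1 = v := by
    rw [hzT 1 (Finset.mem_insert_self 1 {t₀}), hf₀1]
  have hzt₀ : z t₀ = n := by
    rw [hzT t₀ (Finset.mem_insert_of_mem (Finset.mem_singleton_self t₀)), hf₀t]
  have hzinj : Function.Injective z := by
    intro u u' h
    by_contra hne
    exact (hzInv.1 u (Finset.mem_univ u) u' (Finset.mem_univ u') hne).1 h
  have hzB : ∀ u : Γ₂, z u ∉ S.B := by
    intro u
    by_cases hu : u = 1
    · rw [hu, hz1]; exact hv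
    · exact (hzInv.2.1 u (Finset.mem_univ u) hu).1
  -- add the pinned pair
  have hmirror' : ∀ q ∈ S.P, ((gx dec).Adj x' q.1 ↔ R.Adj (z t₀) q.2) := by
    intro q hq
    rw [hzt₀]
    exact (hmirror q hq).symm
  have hzt₀ran : z t₀ ∉ S.ran := by rw [hzt₀]; exact hnran
  obtain ⟨S₁, hext₁, hP₁, hB₁, hμ₁⟩ := addPair S hx'dom hzt₀ran hmirror'
  -- attach the orbit
  have hzB₁ : ∀ u : Γ₂, z u ∉ S₁.B := by rw [hB₁]; exact hzB
  have hrule₁ : ∀ u : Γ₂, ∀ b ∈ S₁.B, (R.Adj (z u) b ↔ R.Adj v (S₁.μ u⁻¹ b)) := by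
    rw [hB₁, hμ₁]
    exact fun u b hb => hzInv.2.2.1 u (Finset.mem_univ u) b hb
  obtain ⟨S', hext₂, hP₂, hB₂, hμz⟩ := orbitAssemble S₁ v z hzinj hzB₁
    (fun u u' h => (hzInv.1 u (Finset.mem_univ u) u' (Finset.mem_univ u') h).2)
    hrule₁
  refine ⟨S', z, hext₁.trans hext₂, hz1, hzinj, by rw [hP₂, hP₁], by rw [hB₂, hB₁], hμz,
    fun s hs => hzInv.2.1 s (Finset.mem_univ s) hs,
    fun s hs m hm => hzInv.2.2.2.1 s (Finset.mem_univ s) hs m hm,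
    fun s s' h => (hzInv.1 s (Finset.mem_univ s) s' (Finset.mem_univ s') h).2,
    fun s b hb => hzInv.2.2.1 s (Finset.mem_univ s) b hb⟩


/-- the density requirement is secured -/
def SecuredD (S : St (Γ₂ := Γ₂) R dec) (F : Finset (V × V)) : Prop :=
  ∃ (g₁ g₂ : Γ₁) (t : Γ₂), t ≠ 1 ∧ ∀ p ∈ F,
    ∃ x x' m, (x, p.1) ∈ S.P ∧ (τ g₁ x, m) ∈ S.P ∧ m ∈ S.B ∧
      (x', S.μ t m) ∈ S.P ∧ (τ g₂ x', p.2) ∈ S.P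

lemma SecuredD_mono {S S' : St (Γ₂ := Γ₂) R dec} (h : Ext S S') {F : Finset (V × V)}
    (hs : SecuredD S F) : SecuredD S' F := by
  obtain ⟨g₁, g₂, t, ht, hall⟩ := hs
  refine ⟨g₁, g₂, t, ht, fun p hp => ?_⟩
  obtain ⟨x, x', m, h1, h2, h3, h4, h5⟩ := hall p hp
  exact ⟨x, x', m, h.1 h1, h.1 h2, h.2.1 h3, by rw [h.2.2 t m h3]; exact h.1 h4, h.1 h5⟩

lemma densityStep [Infinite Γ₁] (hR : R.HasPropR) (hRX : (gx dec).HasPropR)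
    (S₀ : St (Γ₂ := Γ₂) R dec) (F : Finset (V × V))
    (hF₁ : ∀ p ∈ F, ∀ q ∈ F, ((p : V × V).1 = q.1 ↔ p.2 = q.2))
    (hF₂ : ∀ p ∈ F, ∀ q ∈ F, (R.Adj (p : V × V).1 q.1 ↔ R.Adj p.2 q.2))
    (t : Γ₂) (ht : t ≠ 1) :
    ∃ S' : St (Γ₂ := Γ₂) R dec, Ext S₀ S' ∧ SecuredD S' F := by
  -- Step 1: close the range over F
  obtain ⟨S₁, hext₁, hran₁, hB₁, hμ₁⟩ := ensureRanAll hRX S₀ (F.image Prod.fst ∪ F.image Prod.snd)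
  have hranF : ∀ p ∈ F, p.1 ∈ S₁.ran ∧ p.2 ∈ S₁.ran := by
    intro p hp
    exact ⟨hran₁ _ (Finset.mem_union_left _ (Finset.mem_image_of_mem _ hp)),
      hran₁ _ (Finset.mem_union_right _ (Finset.mem_image_of_mem _ hp))⟩
  -- choose preimages
  have hpre : ∀ a : V, ∃ x : Γ₁ × ℕ, a ∈ S₁.ran → (x, a) ∈ S₁.P := by
    intro a
    by_cases ha : a ∈ S₁.ran
    · obtain ⟨q, hq, hq2⟩ := St.mem_ran.1 ha
      refine ⟨q.1, fun _ => ?_⟩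
      have : (q.1, a) = q := by rw [← hq2]
      rw [this]; exact hq
    · exact ⟨(1, 0), fun h => absurd h ha⟩
  choose pre hpre' using hpre
  have hx1 : ∀ p ∈ F, (pre p.1, p.1) ∈ S₁.P := fun p hp => hpre' p.1 (hranF p hp).1
  have hw1 : ∀ p ∈ F, (pre p.2, p.2) ∈ S₁.P := fun p hp => hpre' p.2 (hranF p hp).2
  have hprene : ∀ p ∈ F, ∀ c ∈ F, p ≠ c → pre p.1 ≠ pre c.1 ∧ pre p.2 ≠ pre c.2 := by
    intro p hp c hc hne
    constructor
    · intro hcon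
      have : p.1 = c.1 := by
        have := S₁.hP₁ _ (hx1 p hp) _ (hx1 c hc)
        exact this.1 hcon
      exact hne (Prod.ext this ((hF₁ p hp c hc).1 this))
    · intro hcon
      have : p.2 = c.2 := by
        have := S₁.hP₁ _ (hw1 p hp) _ (hw1 c hc)
        exact this.1 hcon
      exact hne (Prod.ext ((hF₁ p hp c hc).2 this) this)
  -- Step 2: choose h
  obtain ⟨h, hh⟩ := exists_good_h dec ((F.image fun p => pre p.1) ×ˢ (F.image fun p => pre p.2))
  have hcond1 : ∀ p ∈ F, ∀ c ∈ F,
      τ h (pre p.1) ≠ pre c.2 ∧ ¬ (gx dec).Adj (τ h (pre p.1)) (pre c.2) := by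
    intro p hp c hc
    exact hh (pre p.1, pre c.2) (Finset.mem_product.2
      ⟨Finset.mem_image_of_mem _ hp, Finset.mem_image_of_mem _ hc⟩)
  -- u-points
  set u : V × V → Γ₁ × ℕ := fun p => τ h⁻¹ (pre p.2) with hu
  have hτhu : ∀ p, τ h (u p) = pre p.2 := by
    intro p
    rw [hu]
    rw [← τ_mul, mul_inv_cancel, τ_one]
  -- Step 3: choose g₁
  obtain ⟨g₁, hg₁⟩ := exists_good_h dec
    (((F.image fun p => pre p.1) ∪ (F.image u)) ×ˢ S₁.dom)
  have hcond2 : ∀ p ∈ F, ∀ c ∈ S₁.dom,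
      (τ g₁ (pre p.1) ≠ c ∧ ¬ (gx dec).Adj (τ g₁ (pre p.1)) c) ∧
      (τ g₁ (u p) ≠ c ∧ ¬ (gx dec).Adj (τ g₁ (u p)) c) := by
    intro p hp c hc
    constructor
    · exact hg₁ (pre p.1, c) (Finset.mem_product.2
        ⟨Finset.mem_union_left _ (Finset.mem_image_of_mem _ hp), hc⟩)
    · exact hg₁ (u p, c) (Finset.mem_product.2
        ⟨Finset.mem_union_right _ (Finset.mem_image_of_mem _ hp), hc⟩)
  set y : V × V → Γ₁ × ℕ := fun p => τ g₁ (pre p.1) with hy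
  set x' : V × V → Γ₁ × ℕ := fun p => τ g₁ (u p) with hx'
  -- basic facts about the new points
  have hyne : ∀ p ∈ F, ∀ c ∈ F, p ≠ c → y p ≠ y c := by
    intro p hp c hc hne hcon
    exact (hprene p hp c hc hne).1 (τ_inj g₁ hcon)
  have hx'ne : ∀ p ∈ F, ∀ c ∈ F, p ≠ c → x' p ≠ x' c := by
    intro p hp c hc hne hcon
    have := τ_inj g₁ hcon
    rw [hu] at this
    exact (hprene p hp c hc hne).2 (τ_inj h⁻¹ this)
  have hyx' : ∀ p ∈ F, ∀ c ∈ F, y p ≠ x' c := by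
    intro p hp c hc hcon
    have h1 : pre p.1 = u c := τ_inj g₁ hcon
    have h2 : τ h (pre p.1) = pre c.2 := by rw [h1, hτhu]
    exact (hcond1 p hp c hc).1 h2
  have hyadjx' : ∀ p ∈ F, ∀ c ∈ F, ¬ (gx dec).Adj (y p) (x' c) := by
    intro p hp c hc hcon
    rw [hy, hx'] at hcon
    rw [gx_adj_τ] at hcon
    have : (gx dec).Adj (τ h (pre p.1)) (τ h (u c)) := (gx_adj_τ dec h _ _).2 hcon
    rw [hτhu] at this
    exact (hcond1 p hp c hc).2 this
  have hadjyy : ∀ p c, (gx dec).Adj (y p) (y c) ↔ (gx dec).Adj (pre p.1) (pre c.1) := by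
    intro p c
    exact gx_adj_τ dec g₁ _ _
  have hadjx'x' : ∀ p c, (gx dec).Adj (x' p) (x' c) ↔ (gx dec).Adj (pre p.2) (pre c.2) := by
    intro p c
    rw [hx', gx_adj_τ]
    constructor
    · intro hcon
      have := (gx_adj_τ dec h _ _).2 hcon
      rwa [hτhu, hτhu] at this
    · intro hcon
      have : (gx dec).Adj (τ h (u p)) (τ h (u c)) := by rw [hτhu, hτhu]; exact hcon
      exact (gx_adj_τ dec h _ _).1 this
  -- the main loop
  have loop : ∀ (L : List (V × V)), L.Nodup → (∀ p ∈ L, p ∈ F) →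
      ∀ (S : St (Γ₂ := Γ₂) R dec) (Done : Finset (V × V)) (mf nf : V × V → V),
      (∀ c ∈ Done, c ∈ F) → (∀ p ∈ L, p ∉ Done) →
      Ext S₁ S →
      (∀ c ∈ Done, (y c, mf c) ∈ S.P ∧ (x' c, nf c) ∈ S.P ∧ mf c ∈ S.B ∧
        S.μ t (mf c) = nf c ∧ mf c ∉ S₁.B ∧ nf c ∉ S₁.B ∧ mf c ∉ S₁.ran ∧ nf c ∉ S₁.ran) →
      (∀ q ∈ S.P, q ∈ S₁.P ∨ ∃ c ∈ Done, q = (y c, mf c) ∨ q = (x' c, nf c)) →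
      (∀ b ∈ S.B, b ∈ S₁.ran → b ∈ S₁.B) →
      (∀ c ∈ Done, ∃ zc : Γ₂ → V, zc 1 = mf c ∧ zc t = nf c ∧ Function.Injective zc ∧
        (∀ s v₂, S.μ s (zc v₂) = zc (s * v₂)) ∧ (∀ v₂, zc v₂ ∈ S.B) ∧
        (∀ v₂, v₂ ≠ 1 → v₂ ≠ t → zc v₂ ∉ S.ran)) →
      ∃ S' : St (Γ₂ := Γ₂) R dec, Ext S S' ∧
        ∀ p, (p ∈ Done ∨ p ∈ L) →
          ∃ m, (y p, m) ∈ S'.P ∧ m ∈ S'.B ∧ (x' p, S'.μ t m) ∈ S'.P := by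
    intro L
    induction L with
    | nil =>
      intro _ _ S Done mf nf hDF _ _ hP2 _ _ _
      refine ⟨S, Ext.refl S, fun p hp => ?_⟩
      rcases hp with hp | hp
      · obtain ⟨ha, hb, hc, hd, _⟩ := hP2 p hp
        exact ⟨mf p, ha, hc, by rw [hd]; exact hb⟩
      · exact absurd hp (List.not_mem_nil)
    | cons p rest ih =>
      intro hnd hsub S Done mf nf hDF hdisj hext hP2 hP3 hP4 hP5
      have hpF : p ∈ F := hsub p (List.mem_cons_self)
      have hpD : p ∉ Done := hdisj p (List.mem_cons_self)
      -- (a) create m via freshTarget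
      obtain ⟨m, hmB, hmran, hmirror, hmE⟩ := freshTarget hR S (y p) S.B
      -- (b) add the pair (y p, m)
      have hydom : y p ∉ S.dom := by
        intro hcon
        obtain ⟨q, hq, hq1⟩ := Finset.mem_image.1 hcon
        rcases hP3 q hq with hq' | ⟨c, hc, hq'⟩
        · exact (hcond2 p hpF q.1 (Finset.mem_image_of_mem _ hq')).1.1 hq1.symm
        · rcases hq' with hq' | hq'
          · have : q.1 = y c := by rw [hq']
            rw [this] at hq1
            by_cases hpc : p = c
            · exact hpD (hpc ▸ hc)
            · exact hyne c (hDF c hc) p hpF (fun hcc => hpc hcc.symm) hq1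
          · have : q.1 = x' c := by rw [hq']
            rw [this] at hq1
            exact hyx' p hpF c (hDF c hc) hq1.symm
      have hmirror' : ∀ q ∈ S.P, ((gx dec).Adj (y p) q.1 ↔ R.Adj m q.2) :=
        fun q hq => (hmirror q hq).symm
      obtain ⟨S₂, hext₂, hP₂eq, hB₂, hμ₂⟩ := addPair S hydom hmran hmirror'
      -- (c) attach the pinned orbit
      have hmB₂ : m ∉ S₂.B := by rw [hB₂]; exact hmB
      have hx'dom : x' p ∉ S₂.dom := by
        intro hcon
        obtain ⟨q, hq, hq1⟩ := Finset.mem_image.1 hcon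
        rw [hP₂eq] at hq
        rcases Finset.mem_insert.1 hq with hq' | hq'
        · have : q.1 = y p := by rw [hq']
          rw [this] at hq1
          exact hyx' p hpF p hpF hq1
        · rcases hP3 q hq' with hq'' | ⟨c, hc, hq''⟩
          · exact ((hcond2 p hpF q.1 (Finset.mem_image_of_mem _ hq'')).2).1 hq1.symm
          · rcases hq'' with hq'' | hq''
            · have : q.1 = y c := by rw [hq'']
              rw [this] at hq1
              exact hyx' c (hDF c hc) p hpF hq1
            · have : q.1 = x' c := by rw [hq'']
              rw [this] at hq1
              by_cases hpc : p = c
              · exact hpD (hpc ▸ hc)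
              · exact hx'ne c (hDF c hc) p hpF (fun hcc => hpc hcc.symm) hq1
      have hPC : ∀ q ∈ S₂.P, q.2 ∈ S₂.B →
          (R.Adj m (S₂.μ t⁻¹ q.2) ↔ (gx dec).Adj (x' p) q.1) := by
        rw [hP₂eq, hB₂, hμ₂]
        intro q hq hq2
        rcases Finset.mem_insert.1 hq with hq' | hq'
        · exfalso
          have : q.2 = m := by rw [hq']
          rw [this] at hq2
          exact hmB hq2
        · rcases hP3 q hq' with hq'' | ⟨c, hc, hq''⟩
          · -- old pair: both sides false
            have hq2B₁ : q.2 ∈ S₁.B := hP4 q.2 hq2 (Finset.mem_image.2 ⟨q, hq'', rfl⟩)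
            have hLHS : ¬ R.Adj m (S.μ t⁻¹ q.2) := by
              have hd : S.μ t⁻¹ q.2 = S₁.μ t⁻¹ q.2 := hext.2.2 t⁻¹ q.2 hq2B₁
              have hdB₁ : S₁.μ t⁻¹ q.2 ∈ S₁.B := S₁.hBμ t⁻¹ q.2 hq2B₁
              have hdB : S.μ t⁻¹ q.2 ∈ S.B := by rw [hd]; exact hext.2.1 hdB₁
              by_cases hdran : S.μ t⁻¹ q.2 ∈ S.ran
              · obtain ⟨q', hq'p, hq'2⟩ := St.mem_ran.1 hdran
                rcases hP3 q' hq'p with hq'3 | ⟨c, hc, hq'3⟩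
                · rw [← hq'2]
                  intro hcon
                  exact ((hcond2 p hpF q'.1 (Finset.mem_image_of_mem _ hq'3)).1).2
                    ((hmirror q' hq'p).1 hcon)
                · exfalso
                  have hdB₁' : S.μ t⁻¹ q.2 ∈ S₁.B := by rw [hd]; exact hdB₁
                  rcases hq'3 with hq'3 | hq'3
                  · have : q'.2 = mf c := by rw [hq'3]
                    rw [this] at hq'2
                    exact (hP2 c hc).2.2.2.2.1 (by rw [hq'2]; exact hdB₁')
                  · have : q'.2 = nf c := by rw [hq'3]
                    rw [this] at hq'2
                    exact (hP2 c hc).2.2.2.2.2.1 (by rw [hq'2]; exact hdB₁')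
              · exact hmE _ hdB hdran
            have hRHS : ¬ (gx dec).Adj (x' p) q.1 :=
              ((hcond2 p hpF q.1 (Finset.mem_image_of_mem _ hq'')).2).2
            exact iff_of_false hLHS hRHS
          · obtain ⟨zc, hz1, hzt, hzinj, hzμ, hzB, hzran⟩ := hP5 c hc
            rcases hq'' with hq'' | hq''
            · -- q = (y c, mf c)
              have hq1 : q.1 = y c := by rw [hq'']
              have hq2' : q.2 = mf c := by rw [hq'']
              have hLHS : ¬ R.Adj m (S.μ t⁻¹ q.2) := by
                rw [hq2', ← hz1, hzμ, mul_one]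
                by_cases htt : t⁻¹ = t
                · rw [htt, hzt]
                  intro hcon
                  have := (hmirror _ (hP2 c hc).2.1).1 hcon
                  exact hyadjx' p hpF c (hDF c hc) this
                · have h1 : zc t⁻¹ ∉ S.ran := hzran t⁻¹ (inv_ne_one.2 ht) htt
                  exact hmE _ (hzB t⁻¹) h1
              have hRHS : ¬ (gx dec).Adj (x' p) q.1 := by
                rw [hq1]
                intro hcon
                exact hyadjx' c (hDF c hc) p hpF hcon.symm
              exact iff_of_false hLHS hRHS
            · -- q = (x' c, nf c)
              have hq1 : q.1 = x' c := by rw [hq'']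
              have hq2' : q.2 = nf c := by rw [hq'']
              have hcF : c ∈ F := hDF c hc
              have hLHS : R.Adj m (S.μ t⁻¹ q.2) ↔ R.Adj p.1 c.1 := by
                rw [hq2', ← hzt, hzμ, inv_mul_cancel, hz1]
                rw [hmirror _ (hP2 c hc).1]
                rw [hadjyy]
                exact S.hP₂ _ (hext.1 (hx1 p hpF)) _ (hext.1 (hx1 c hcF))
              have hRHS : (gx dec).Adj (x' p) q.1 ↔ R.Adj p.1 c.1 := by
                rw [hq1, hadjx'x']
                rw [S.hP₂ _ (hext.1 (hw1 p hpF)) _ (hext.1 (hw1 c hcF))]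
                exact (hF₂ p hpF c hcF).symm
              rw [hLHS, hRHS]
            
      have hPM : ∀ q ∈ S₂.P, (q.2 ∈ (∅ : Finset V) ∨ q.2 = m) →
          ¬ (gx dec).Adj (x' p) q.1 := by
        rw [hP₂eq]
        intro q hq hq2
        rcases hq2 with hq2 | hq2
        · exact absurd hq2 (Finset.notMem_empty _)
        · rcases Finset.mem_insert.1 hq with hq' | hq'
          · have : q.1 = y p := by rw [hq']
            rw [this]
            intro hcon
            exact hyadjx' p hpF p hpF hcon.symm
          · exfalso
            exact hmran (St.mem_ran.2 ⟨q, hq', hq2⟩)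
      obtain ⟨S₃, z, hext₃, hz1, hzinj, hP₃eq, hB₃, hμz, hzfresh, _, hzpair, hzrule⟩ :=
        orbitPin hR S₂ m hmB₂ t ht ∅ ∅ (fun m₂ hm₂ => absurd hm₂ (Finset.notMem_empty _))
        (x' p) hx'dom hPC hPM
      -- re-establish the invariants
      have hextS : Ext S S₃ := hext₂.trans hext₃
      have hrest_sub : ∀ q ∈ rest, q ∈ F := fun q hq => hsub q (List.mem_cons_of_mem p hq)
      have hrest_nd : rest.Nodup := (List.nodup_cons.1 hnd).2
      have hpnotin : p ∉ rest := (List.nodup_cons.1 hnd).1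
      set Done' := insert p Done with hDone'
      set mf' := Function.update mf p m with hmf'
      set nf' := Function.update nf p (z t) with hnf'
      have hmf'p : mf' p = m := Function.update_self _ _ _
      have hnf'p : nf' p = z t := Function.update_self _ _ _
      have hmf'old : ∀ c ∈ Done, mf' c = mf c := by
        intro c hc
        exact Function.update_of_ne (fun hcc => hpD (by rw [← hcc]; exact hc)) _ _
      have hnf'old : ∀ c ∈ Done, nf' c = nf c := by
        intro c hc
        exact Function.update_of_ne (fun hcc => hpD (by rw [← hcc]; exact hc)) _ _
      have hS₃P : S₃.P = insert (x' p, z t) (insert (y p, m) S.P) := by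
        rw [hP₃eq, hP₂eq]
      have hztB : z t ∉ S₂.B := (hzfresh t ht).1
      have hztranS : z t ∉ S.ran := by
        intro hcon
        obtain ⟨q, hq, hq2⟩ := St.mem_ran.1 hcon
        refine (hzfresh t ht).2.1 (St.mem_ran.2 ⟨q, ?_, hq2⟩)
        rw [hP₂eq]; exact Finset.mem_insert_of_mem hq
      have hS₃ran : ∀ b, b ∈ S₃.ran → b = z t ∨ b = m ∨ b ∈ S.ran := by
        intro b hb
        obtain ⟨q, hq, hq2⟩ := St.mem_ran.1 hb
        rw [hS₃P] at hq
        rcases Finset.mem_insert.1 hq with hq' | hq'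
        · left; rw [← hq2, hq']
        · rcases Finset.mem_insert.1 hq' with hq'' | hq''
          · right; left; rw [← hq2, hq'']
          · right; right; exact St.mem_ran.2 ⟨q, hq'', hq2⟩
      have hzuran : ∀ u₂ : Γ₂, u₂ ≠ 1 → u₂ ≠ t → z u₂ ∉ S₃.ran := by
        intro u₂ h1 h2 hcon
        rcases hS₃ran _ hcon with hc | hc | hc
        · exact h2 (hzinj hc)
        · rw [← hz1] at hc
          exact h1 (hzinj hc)
        · refine (hzfresh u₂ h1).2.1 (St.mem_ran.2 ?_)
          obtain ⟨q, hq, hq2⟩ := St.mem_ran.1 hc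
          exact ⟨q, by rw [hP₂eq]; exact Finset.mem_insert_of_mem hq, hq2⟩
      have hDF' : ∀ c ∈ Done', c ∈ F := by
        intro c hc
        rcases Finset.mem_insert.1 hc with hc | hc
        · exact hc ▸ hpF
        · exact hDF c hc
      have hdisj' : ∀ q ∈ rest, q ∉ Done' := by
        intro q hq hcon
        rcases Finset.mem_insert.1 hcon with hc | hc
        · exact hpnotin (hc ▸ hq)
        · exact hdisj q (List.mem_cons_of_mem p hq) hc
      have hmzt : m ∈ S₃.B := by
        rw [hB₃]
        exact Finset.mem_union_right _ (by
          rw [← hz1]; exact Finset.mem_image_of_mem _ (Finset.mem_univ 1))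
      have hP2' : ∀ c ∈ Done', (y c, mf' c) ∈ S₃.P ∧ (x' c, nf' c) ∈ S₃.P ∧ mf' c ∈ S₃.B ∧
          S₃.μ t (mf' c) = nf' c ∧ mf' c ∉ S₁.B ∧ nf' c ∉ S₁.B ∧
          mf' c ∉ S₁.ran ∧ nf' c ∉ S₁.ran := by
        intro c hc
        rcases Finset.mem_insert.1 hc with hc | hc
        · subst hc
          rw [hmf'p, hnf'p]
          refine ⟨?_, ?_, hmzt, ?_, ?_, ?_, ?_, ?_⟩
          · rw [hS₃P]; exact Finset.mem_insert_of_mem (Finset.mem_insert_self _ _)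
          · rw [hS₃P]; exact Finset.mem_insert_self _ _
          · rw [← hz1, hμz, mul_one]
          · exact fun hcon => hmB (hext.2.1 hcon)
          · exact fun hcon => hztB (by rw [hB₂]; exact hext.2.1 hcon)
          · exact fun hcon => hmran (hext.ran_subset hcon)
          · exact fun hcon => hztranS (hext.ran_subset hcon)
        · have hold := hP2 c hc
          rw [hmf'old c hc, hnf'old c hc]
          exact ⟨hextS.1 hold.1, hextS.1 hold.2.1, hextS.2.1 hold.2.2.1,
            by rw [hextS.2.2 t (mf c) hold.2.2.1, hold.2.2.2.1], hold.2.2.2.2.1,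
            hold.2.2.2.2.2.1, hold.2.2.2.2.2.2.1, hold.2.2.2.2.2.2.2⟩
      have hP3' : ∀ q ∈ S₃.P, q ∈ S₁.P ∨ ∃ c ∈ Done', q = (y c, mf' c) ∨ q = (x' c, nf' c) := by
        intro q hq
        rw [hS₃P] at hq
        rcases Finset.mem_insert.1 hq with hq' | hq'
        · right
          exact ⟨p, Finset.mem_insert_self _ _, Or.inr (by rw [hq', hnf'p])⟩
        · rcases Finset.mem_insert.1 hq' with hq'' | hq''
          · right
            exact ⟨p, Finset.mem_insert_self _ _, Or.inl (by rw [hq'', hmf'p])⟩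
          · rcases hP3 q hq'' with hc | ⟨c, hc, hcc⟩
            · exact Or.inl hc
            · right
              refine ⟨c, Finset.mem_insert_of_mem hc, ?_⟩
              rw [hmf'old c hc, hnf'old c hc]
              exact hcc
      have hP4' : ∀ b ∈ S₃.B, b ∈ S₁.ran → b ∈ S₁.B := by
        intro b hb hbran
        rw [hB₃, hB₂] at hb
        rcases Finset.mem_union.1 hb with hb | hb
        · exact hP4 b hb hbran
        · exfalso
          obtain ⟨u₂, _, hu₂⟩ := Finset.mem_image.1 hb
          by_cases h1 : u₂ = 1
          · rw [h1, hz1] at hu₂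
            exact hmran (hext.ran_subset (hu₂ ▸ hbran))
          · refine (hzfresh u₂ h1).2.1 ?_
            have : z u₂ ∈ S₁.ran := hu₂ ▸ hbran
            exact (hext₂.ran_subset (hext.ran_subset this))
      have hP5' : ∀ c ∈ Done', ∃ zc : Γ₂ → V, zc 1 = mf' c ∧ zc t = nf' c ∧
          Function.Injective zc ∧
          (∀ s v₂, S₃.μ s (zc v₂) = zc (s * v₂)) ∧ (∀ v₂, zc v₂ ∈ S₃.B) ∧
          (∀ v₂, v₂ ≠ 1 → v₂ ≠ t → zc v₂ ∉ S₃.ran) := by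
        intro c hc
        rcases Finset.mem_insert.1 hc with hc | hc
        · subst hc
          rw [hmf'p, hnf'p]
          refine ⟨z, hz1, rfl, hzinj, hμz, ?_, hzuran⟩
          intro v₂
          rw [hB₃]
          exact Finset.mem_union_right _ (Finset.mem_image_of_mem _ (Finset.mem_univ v₂))
        · obtain ⟨zc, hc1, hc2, hc3, hc4, hc5, hc6⟩ := hP5 c hc
          rw [hmf'old c hc, hnf'old c hc]
          refine ⟨zc, hc1, hc2, hc3, ?_, ?_, ?_⟩
          · intro s v₂
            rw [hextS.2.2 s (zc v₂) (hc5 v₂), hc4]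
          · intro v₂
            exact hextS.2.1 (hc5 v₂)
          · intro v₂ h1 h2 hcon
            rcases hS₃ran _ hcon with hcc | hcc | hcc
            · exact hztB (by rw [hB₂, ← hcc]; exact hc5 v₂)
            · exact hmB (by rw [← hcc]; exact hc5 v₂)
            · exact hc6 v₂ h1 h2 hcc
      obtain ⟨S', hext', hfin⟩ := ih hrest_nd hrest_sub S₃ Done' mf' nf' hDF' hdisj'
        (hext.trans hextS) hP2' hP3' hP4' hP5'
      refine ⟨S', hextS.trans hext', fun q hq => ?_⟩
      rcases hq with hq | hq
      · exact hfin q (Or.inl (Finset.mem_insert_of_mem hq))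
      · rcases List.mem_cons.1 hq with hq | hq
        · exact hfin q (Or.inl (by rw [hq]; exact Finset.mem_insert_self _ _))
        · exact hfin q (Or.inr hq)
  -- apply the loop
  obtain ⟨S', hext', hfin⟩ := loop F.toList F.nodup_toList (fun p hp => Finset.mem_toList.1 hp)
    S₁ ∅ (fun p => p.1) (fun p => p.1)
    (fun c hc => absurd hc (Finset.notMem_empty c))
    (fun p _ hc => absurd hc (Finset.notMem_empty p))
    (Ext.refl S₁)
    (fun c hc => absurd hc (Finset.notMem_empty c))
    (fun q hq => Or.inl hq)
    (fun b hb _ => hb)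
    (fun c hc => absurd hc (Finset.notMem_empty c))
  refine ⟨S', hext₁.trans hext', ?_⟩
  refine ⟨g₁, h * g₁⁻¹, t, ht, fun p hp => ?_⟩
  obtain ⟨m, hm1, hm2, hm3⟩ := hfin p (Or.inr (Finset.mem_toList.2 hp))
  refine ⟨pre p.1, x' p, m, hext'.1 (hx1 p hp), hm1, hm2, hm3, ?_⟩
  have hτ : τ (h * g₁⁻¹) (x' p) = pre p.2 := by
    rw [hx', ← τ_mul, mul_assoc, inv_mul_cancel, mul_one, hτhu]
  rw [hτ]
  exact hext'.1 (hw1 p hp)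

/-- single letter forcing -/
def FL (S : St (Γ₂ := Γ₂) R dec) : Γ₁ ⊕ Γ₂ → V → V → Prop
  | Sum.inl g => fun v w => ∃ x, (x, v) ∈ S.P ∧ (τ g x, w) ∈ S.P
  | Sum.inr t => fun v w => v ∈ S.B ∧ S.μ t v = w

/-- word forcing, in application order -/
def RF (S : St (Γ₂ := Γ₂) R dec) : List (Γ₁ ⊕ Γ₂) → V → V → Prop
  | [] => fun v w => w = v
  | ℓ :: r => fun v w => ∃ u, FL S ℓ v u ∧ RF S r u w

lemma FL_mono {S S' : St (Γ₂ := Γ₂) R dec} (h : Ext S S') {ℓ : Γ₁ ⊕ Γ₂} {v w : V}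
    (hf : FL S ℓ v w) : FL S' ℓ v w := by
  cases ℓ with
  | inl g =>
    obtain ⟨x, h1, h2⟩ := hf
    exact ⟨x, h.1 h1, h.1 h2⟩
  | inr t =>
    exact ⟨h.2.1 hf.1, by rw [h.2.2 t v hf.1]; exact hf.2⟩

lemma RF_mono {S S' : St (Γ₂ := Γ₂) R dec} (h : Ext S S') {l : List (Γ₁ ⊕ Γ₂)} {v w : V}
    (hf : RF S l v w) : RF S' l v w := by
  induction l generalizing v with
  | nil => exact hf
  | cons ℓ r ih =>
    obtain ⟨u, h1, h2⟩ := hf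
    exact ⟨u, FL_mono h h1, ih h2⟩

/-- the faithfulness requirement is secured -/
def SecuredF (S : St (Γ₂ := Γ₂) R dec) (l : List (Γ₁ ⊕ Γ₂)) : Prop :=
  ∃ v₀ v', v' ≠ v₀ ∧ RF S l v₀ v'

lemma SecuredF_mono {S S' : St (Γ₂ := Γ₂) R dec} (h : Ext S S') {l : List (Γ₁ ⊕ Γ₂)}
    (hs : SecuredF S l) : SecuredF S' l := by
  obtain ⟨v₀, v', h1, h2⟩ := hs
  exact ⟨v₀, v', h1, RF_mono h h2⟩

lemma faithfulChain (hR : R.HasPropR) (hRX : (gx dec).HasPropR) :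
    ∀ (l : List (Γ₁ ⊕ Γ₂)), List.Chain' altR l → (∀ ℓ ∈ l, goodLetter ℓ) →
    ∀ (S : St (Γ₂ := Γ₂) R dec) (v : V) (E : Finset V),
    (∀ g : Γ₁, l.head? = some (Sum.inl g) →
      v ∉ S.ran ∧ ∀ q ∈ S.P, ¬ R.Adj v q.2) →
    (∀ t' : Γ₂, l.head? = some (Sum.inr t') →
      v ∉ S.B ∧ ∀ b ∈ S.B, ¬ R.Adj v b) →
    ∃ (S' : St (Γ₂ := Γ₂) R dec) (v' : V), Ext S S' ∧ RF S' l v v' ∧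
      (l = [] → v' = v) ∧ (l ≠ [] → v' ∉ E) := by
  intro l
  induction l with
  | nil =>
    intro _ _ S v E _ _
    exact ⟨S, v, Ext.refl S, rfl, fun _ => rfl, fun h => absurd rfl h⟩
  | cons ℓ r ih =>
    intro hchain hgood S v E hpreL hpreR
    have hchain' : List.Chain' altR r := hchain.tail
    have hgood' : ∀ ℓ' ∈ r, goodLetter ℓ' := fun ℓ' h => hgood ℓ' (List.mem_cons_of_mem ℓ h)
    have hrel : ∀ ℓ' ∈ r.head?, altR ℓ ℓ' := List.isChain_cons.1 hchain |>.1
    cases ℓ with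
    | inl g =>
      have hg : g ≠ 1 := hgood (Sum.inl g) (List.mem_cons_self)
      obtain ⟨hvran, hvadj⟩ := hpreL g rfl
      -- choose the source x
      obtain ⟨x, hxE, hxdom, hxm, hxEc⟩ := freshSource hRX S v
        (S.dom ∪ S.dom.image (τ g⁻¹) ∪ S.dom.image (τ g))
      have hxm' : ∀ q ∈ S.P, ¬ (gx dec).Adj x q.1 := by
        intro q hq hcon
        exact hvadj q hq ((hxm q hq).1 hcon)
      have hτgx : τ g x ∉ S.dom := by
        intro hcon
        exact hxE (Finset.mem_union_left _ (Finset.mem_union_right _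
          (Finset.mem_image.2 ⟨τ g x, hcon, by rw [← τ_mul, inv_mul_cancel, τ_one]⟩)))
      have hxadjtrans : ∀ c ∈ S.dom, ¬ (gx dec).Adj x (τ g⁻¹ c) := by
        intro c hc hcon
        by_cases hmem : τ g⁻¹ c ∈ S.dom
        · obtain ⟨q, hq, hq1⟩ := Finset.mem_image.1 hmem
          rw [← hq1] at hcon
          exact hxm' q hq hcon
        · refine hxEc (τ g⁻¹ c) ?_ hmem hcon
          exact Finset.mem_union_left _ (Finset.mem_union_right _
            (Finset.mem_image.2 ⟨c, hc, rfl⟩))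
      obtain ⟨S₂, hext₂, hP₂eq, hB₂, hμ₂⟩ := addPair S hxdom hvran hxm
      -- choose the target v'
      have hτgxdom₂ : τ g x ∉ S₂.dom := by
        intro hcon
        obtain ⟨q, hq, hq1⟩ := Finset.mem_image.1 hcon
        rw [hP₂eq] at hq
        rcases Finset.mem_insert.1 hq with hq' | hq'
        · have : q.1 = x := by rw [hq']
          rw [this] at hq1
          exact hg (τ_free hq1.symm)
        · exact hτgx (Finset.mem_image.2 ⟨q, hq', hq1⟩)
      have hτgxadj : ∀ q ∈ S₂.P, ¬ (gx dec).Adj (τ g x) q.1 := by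
        intro q hq hcon
        rw [hP₂eq] at hq
        rcases Finset.mem_insert.1 hq with hq' | hq'
        · have : q.1 = x := by rw [hq']
          rw [this] at hcon
          exact gx_not_adj_τ_self dec g x hcon
        · have : (gx dec).Adj x (τ g⁻¹ q.1) := by
            have := (gx_adj_τ dec g⁻¹ (τ g x) q.1).2 hcon
            rwa [← τ_mul, inv_mul_cancel, τ_one] at this
          exact hxadjtrans q.1 (Finset.mem_image.2 ⟨q, hq', rfl⟩) this
      obtain ⟨v', hv'E, hv'ran, hv'm, hv'Ec⟩ := freshTarget hR S₂ (τ g x) (S.B ∪ E ∪ {v})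
      have hv'adj : ∀ q ∈ S₂.P, ¬ R.Adj v' q.2 := by
        intro q hq hcon
        exact hτgxadj q hq ((hv'm q hq).1 hcon)
      obtain ⟨S₃, hext₃, hP₃eq, hB₃, hμ₃⟩ := addPair S₂ hτgxdom₂ hv'ran
        (fun q hq => iff_of_false (hτgxadj q hq) (fun h => hv'adj q hq h))
      have hFL : FL S₃ (Sum.inl g) v v' := by
        refine ⟨x, ?_, ?_⟩
        · rw [hP₃eq, hP₂eq]
          exact Finset.mem_insert_of_mem (Finset.mem_insert_self _ _)
        · rw [hP₃eq]
          exact Finset.mem_insert_self _ _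
      -- establish preconditions for the tail
      have hv'B : v' ∉ S₃.B := by
        rw [hB₃, hB₂]
        intro hcon
        exact hv'E (Finset.mem_union_left _ (Finset.mem_union_left _ hcon))
      have hv'Badj : ∀ b ∈ S₃.B, ¬ R.Adj v' b := by
        rw [hB₃, hB₂]
        intro b hb hcon
        by_cases hbran : b ∈ S₂.ran
        · obtain ⟨q, hq, hq2⟩ := St.mem_ran.1 hbran
          rw [← hq2] at hcon
          exact hv'adj q hq hcon
        · exact hv'Ec b (Finset.mem_union_left _ (Finset.mem_union_left _ hb)) hbran hcon
      obtain ⟨S', v'', hext', hRF, hnil, hne⟩ := ih hchain' hgood' S₃ v' E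
        (fun g' hh => by
          exfalso
          have := hrel (Sum.inl g') (by rw [hh]; rfl)
          simp [altR] at this)
        (fun t' _ => ⟨hv'B, hv'Badj⟩)
      refine ⟨S', v'', (hext₂.trans hext₃).trans hext', ⟨v', FL_mono hext' hFL, hRF⟩, ?_, ?_⟩
      · intro hcon
        exact (List.cons_ne_nil _ _ hcon).elim
      · intro _
        by_cases hr : r = []
        · rw [hnil hr]
          intro hcon
          exact hv'E (Finset.mem_union_left _ (Finset.mem_union_right _ hcon))
        · exact hne hr
    | inr t' =>
      have ht' : t' ≠ 1 := hgood (Sum.inr t') (List.mem_cons_self)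
      obtain ⟨hvB, hvBadj⟩ := hpreR t' rfl
      obtain ⟨S₂, z, hext₂, hz1, hzinj, hP₂eq, hB₂, hμz, hzfresh, hzM, hzpair, hzrule, hzranadj⟩ :=
        orbitFree hR S v hvB ∅ E (fun m hm => absurd hm (Finset.notMem_empty m))
      have hFL : FL S₂ (Sum.inr t') v (z t') := by
        refine ⟨?_, ?_⟩
        · rw [hB₂, ← hz1]
          exact Finset.mem_union_right _ (Finset.mem_image_of_mem _ (Finset.mem_univ 1))
        · rw [← hz1, hμz, mul_one]
      have hran₂ : S₂.ran = S.ran := by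
        unfold St.ran
        rw [hP₂eq]
      have hztran : z t' ∉ S₂.ran := by
        rw [hran₂]
        exact (hzfresh t' ht').2.1
      have hztadj : ∀ q ∈ S₂.P, ¬ R.Adj (z t') q.2 := by
        rw [hP₂eq]
        intro q hq hcon
        have hq2 : q.2 ∈ S.ran := Finset.mem_image.2 ⟨q, hq, rfl⟩
        by_cases hq2B : q.2 ∈ S.B
        · have := (hzrule t' q.2 hq2B).1 hcon
          exact hvBadj _ (S.hBμ t'⁻¹ q.2 hq2B) this
        · exact hzranadj t' ht' q.2 hq2 hq2B hcon
      obtain ⟨S', v'', hext', hRF, hnil, hne⟩ := ih hchain' hgood' S₂ (z t') E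
        (fun g' _ => ⟨hztran, hztadj⟩)
        (fun t'' hh => by
          exfalso
          have := hrel (Sum.inr t'') (Option.mem_def.mpr hh)
          simp [altR] at this)
      refine ⟨S', v'', hext₂.trans hext', ⟨z t', FL_mono hext' hFL, hRF⟩, ?_, ?_⟩
      · intro hcon
        exact (List.cons_ne_nil _ _ hcon).elim
      · intro _
        by_cases hr : r = []
        · rw [hnil hr]
          exact (hzfresh t' ht').2.2.2
        · exact hne hr

/-- securing a faithfulness requirement -/
lemma faithfulStep (hR : R.HasPropR) (hRX : (gx dec).HasPropR)
    (S₀ : St (Γ₂ := Γ₂) R dec) (l : List (Γ₁ ⊕ Γ₂)) (hl : l ≠ [])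
    (hchain : List.Chain' altR l) (hgood : ∀ ℓ ∈ l, goodLetter ℓ) :
    ∃ S' : St (Γ₂ := Γ₂) R dec, Ext S₀ S' ∧ SecuredF S' l := by
  obtain ⟨v₀, hv₀U, hv₀W, _, hv₀adj⟩ := hR ∅ (S₀.B ∪ S₀.ran) (Finset.disjoint_empty_left _)
  have hv₀B : v₀ ∉ S₀.B := fun h => hv₀W (Finset.mem_union_left _ h)
  have hv₀ran : v₀ ∉ S₀.ran := fun h => hv₀W (Finset.mem_union_right _ h)
  have hv₀Badj : ∀ b ∈ S₀.B, ¬ R.Adj v₀ b :=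
    fun b hb => hv₀adj b (Finset.mem_union_left _ hb)
  have hv₀radj : ∀ q ∈ S₀.P, ¬ R.Adj v₀ q.2 :=
    fun q hq => hv₀adj q.2 (Finset.mem_union_right _ (Finset.mem_image.2 ⟨q, hq, rfl⟩))
  obtain ⟨S', v', hext, hRF, _, hneq⟩ := faithfulChain hR hRX l hchain hgood S₀ v₀ {v₀}
    (fun g _ => ⟨hv₀ran, hv₀radj⟩)
    (fun t' _ => ⟨hv₀B, hv₀Badj⟩)
  refine ⟨S', hext, v₀, v', ?_, hRF⟩
  intro hcon
  exact (hneq hl) (by rw [hcon]; exact Finset.mem_singleton_self v₀)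

def GoodW (l : List (Γ₁ ⊕ Γ₂)) : Prop :=
  l ≠ [] ∧ List.Chain' altR l ∧ ∀ ℓ ∈ l, goodLetter ℓ

def ValidF (R : SimpleGraph V) (F : Finset (V × V)) : Prop :=
  (∀ p ∈ F, ∀ q ∈ F, ((p : V × V).1 = q.1 ↔ p.2 = q.2)) ∧
  (∀ p ∈ F, ∀ q ∈ F, (R.Adj (p : V × V).1 q.1 ↔ R.Adj p.2 q.2))

def DoneReq (S : St (Γ₂ := Γ₂) R dec) :
    ((Γ₁ × ℕ) ⊕ V ⊕ (Finset (V × V)) ⊕ (List (Γ₁ ⊕ Γ₂))) → Prop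
  | Sum.inl x => x ∈ S.dom
  | Sum.inr (Sum.inl v) => v ∈ S.ran ∧ v ∈ S.B
  | Sum.inr (Sum.inr (Sum.inl F)) => ValidF R F → SecuredD S F
  | Sum.inr (Sum.inr (Sum.inr l)) => GoodW l → SecuredF S l

/-- the default state -/
def S0 (R : SimpleGraph V) (dec : ℕ → Finset (Γ₁ × ℕ)) : St (Γ₂ := Γ₂) R dec where
  P := ∅
  B := ∅
  μ := fun _ v => v
  hP₁ := fun p hp => absurd hp (Finset.notMem_empty p)
  hP₂ := fun p hp => absurd hp (Finset.notMem_empty p)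
  hBμ := fun _ v hv => absurd hv (Finset.notMem_empty v)
  hμ1 := fun v hv => absurd hv (Finset.notMem_empty v)
  hμm := fun _ _ v hv => absurd hv (Finset.notMem_empty v)
  hμA := fun _ v hv => absurd hv (Finset.notMem_empty v)

lemma stepLemma [Infinite Γ₁] (hR : R.HasPropR) (hRX : (gx dec).HasPropR)
    (t₀ : Γ₂) (ht₀ : t₀ ≠ 1) (S : St (Γ₂ := Γ₂) R dec)
    (r : (Γ₁ × ℕ) ⊕ V ⊕ (Finset (V × V)) ⊕ (List (Γ₁ ⊕ Γ₂))) :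
    ∃ S' : St (Γ₂ := Γ₂) R dec, Ext S S' ∧ DoneReq S' r := by
  match r with
  | Sum.inl x =>
    obtain ⟨S', h1, h2, _, _⟩ := ensureDom hR S x
    exact ⟨S', h1, h2⟩
  | Sum.inr (Sum.inl v) =>
    obtain ⟨S₁, h1, h2, _, _⟩ := ensureRan hRX S v
    by_cases hv : v ∈ S₁.B
    · exact ⟨S₁, h1, h2, hv⟩
    · obtain ⟨S₂, z, hext₂, hz1, _, hP₂eq, hB₂, _, _, _, _, _, _⟩ :=
        orbitFree hR S₁ v hv ∅ ∅ (fun m hm => absurd hm (Finset.notMem_empty m))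
      refine ⟨S₂, h1.trans hext₂, hext₂.ran_subset h2, ?_⟩
      rw [hB₂, ← hz1]
      exact Finset.mem_union_right _ (Finset.mem_image_of_mem _ (Finset.mem_univ 1))
  | Sum.inr (Sum.inr (Sum.inl F)) =>
    by_cases hF : ValidF R F
    · obtain ⟨S', h1, h2⟩ := densityStep hR hRX S F hF.1 hF.2 t₀ ht₀
      exact ⟨S', h1, fun _ => h2⟩
    · exact ⟨S, Ext.refl S, fun h => absurd h hF⟩
  | Sum.inr (Sum.inr (Sum.inr l)) =>
    by_cases hl : GoodW l
    · obtain ⟨S', h1, h2⟩ := faithfulStep hR hRX S l hl.1 hl.2.1 hl.2.2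
      exact ⟨S', h1, fun _ => h2⟩
    · exact ⟨S, Ext.refl S, fun h => absurd h hl⟩

end States

end FMS

/-- An action of `Γ` on a graph `G` is homogeneous if every isomorphism between finite
induced subgraphs is realised by a group element. -/
def IsHomogeneousAction {Γ : Type*} [Group Γ] {V : Type*} (G : SimpleGraph V)
    (ρ : Γ →* (G ≃g G)) : Prop :=
  ∀ (A : Finset V) (φ : V → V), Set.InjOn φ (↑A : Set V) →
    (∀ u ∈ A, ∀ v ∈ A, G.Adj u v ↔ G.Adj (φ u) (φ v)) →
    ∃ g : Γ, ∀ u ∈ A, ρ g u = φ u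

/-- The free product of a countably infinite group and a nontrivial finite group admits
a faithful homogeneous action on any countable graph with property (R). -/
theorem freeProduct_inftyFinite_homogeneous {Γ₁ Γ₂ : Type*} [Group Γ₁] [Group Γ₂]
    [Countable Γ₁] [Infinite Γ₁] [Finite Γ₂] (hΓ₂ : Nontrivial Γ₂)
    {V : Type*} [Countable V] (R : SimpleGraph V) (hR : R.HasPropR) :
    ∃ ρ : Monoid.Coprod Γ₁ Γ₂ →* (R ≃g R),
      Function.Injective ρ ∧ IsHomogeneousAction R ρ := by
  classical
  letI : Fintype Γ₂ := Fintype.ofFinite Γ₂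
  haveI := hΓ₂
  obtain ⟨t₀, ht₀⟩ := exists_ne (1 : Γ₂)
  -- the decode function for the auxiliary graph
  obtain ⟨dF, hdF⟩ := exists_surjective_nat (Finset (Γ₁ × ℕ))
  set dec : ℕ → Finset (Γ₁ × ℕ) := fun k => dF (Nat.unpair k).1 with hdecdef
  have hrich : FMS.DecRich dec := by
    intro U n
    obtain ⟨m, hm⟩ := hdF U
    refine ⟨Nat.pair m (n + 1), ?_, ?_⟩
    · have := Nat.right_le_pair m (n + 1)
      omega
    · rw [hdecdef]
      simp only [Nat.unpair_pair]
      exact hm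
  have hRX := FMS.gx_propR hrich
  -- requirements
  obtain ⟨e, he⟩ := exists_surjective_nat ((Γ₁ × ℕ) ⊕ V ⊕ (Finset (V × V)) ⊕ (List (Γ₁ ⊕ Γ₂)))
  choose step hstep1 hstep2 using
    fun (S : FMS.St (Γ₂ := Γ₂) R dec) r => FMS.stepLemma hR hRX t₀ ht₀ S r
  set seq : ℕ → FMS.St (Γ₂ := Γ₂) R dec :=
    fun n => Nat.rec (FMS.S0 R dec) (fun n S => step S (e n)) n with hseqdef
  have hseqsucc : ∀ n, seq (n + 1) = step (seq n) (e n) := fun n => rfl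
  have hchain : ∀ m n, m ≤ n → FMS.Ext (seq m) (seq n) := by
    intro m n hmn
    induction n, hmn using Nat.le_induction with
    | base => exact FMS.Ext.refl _
    | succ n hmn ih =>
      refine ih.trans ?_
      rw [hseqsucc]
      exact hstep1 (seq n) (e n)
  have hdone : ∀ r, ∃ n, FMS.DoneReq (seq n) r := by
    intro r
    obtain ⟨n, hn⟩ := he r
    refine ⟨n + 1, ?_⟩
    rw [hseqsucc, ← hn]
    exact hstep2 (seq n) (e n)
  -- the limit isomorphism Θ
  have hΘex : ∀ x : Γ₁ × ℕ, ∃ (a : V) (n : ℕ), (x, a) ∈ (seq n).P := by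
    intro x
    obtain ⟨n, hn⟩ := hdone (Sum.inl x)
    obtain ⟨q, hq, hq1⟩ := Finset.mem_image.1 (hn : x ∈ (seq n).dom)
    refine ⟨q.2, n, ?_⟩
    have : ((x, q.2) : (Γ₁ × ℕ) × V) = q := Prod.ext hq1.symm rfl
    rw [this]
    exact hq
  choose Θ nΘ hΘ using hΘex
  have hfunc : ∀ {x : Γ₁ × ℕ} {a : V} {n : ℕ}, (x, a) ∈ (seq n).P → Θ x = a := by
    intro x a n h
    have h2 := (hchain _ _ (le_max_left (nΘ x) n)).1 (hΘ x)
    have h3 := (hchain _ _ (le_max_right (nΘ x) n)).1 h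
    exact ((seq (max (nΘ x) n)).hP₁ _ h2 _ h3).1 rfl
  have hΘinj : Function.Injective Θ := by
    intro x y h
    have h2 := (hchain _ _ (le_max_left (nΘ x) (nΘ y))).1 (hΘ x)
    have h3 := (hchain _ _ (le_max_right (nΘ x) (nΘ y))).1 (hΘ y)
    exact ((seq (max (nΘ x) (nΘ y))).hP₁ _ h2 _ h3).2 h
  have hΘsurj : Function.Surjective Θ := by
    intro a
    obtain ⟨n, hn⟩ := hdone (Sum.inr (Sum.inl a))
    obtain ⟨q, hq, hq2⟩ := FMS.St.mem_ran.1 hn.1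
    refine ⟨q.1, hfunc (n := n) ?_⟩
    have : ((q.1, a) : (Γ₁ × ℕ) × V) = q := Prod.ext rfl hq2.symm
    rw [this]
    exact hq
  have hΘadj : ∀ x y, R.Adj (Θ x) (Θ y) ↔ (FMS.gx dec).Adj x y := by
    intro x y
    have h2 := (hchain _ _ (le_max_left (nΘ x) (nΘ y))).1 (hΘ x)
    have h3 := (hchain _ _ (le_max_right (nΘ x) (nΘ y))).1 (hΘ y)
    exact ((seq (max (nΘ x) (nΘ y))).hP₂ _ h2 _ h3).symm
  set θE : (Γ₁ × ℕ) ≃ V := Equiv.ofBijective Θ ⟨hΘinj, hΘsurj⟩ with hθE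
  set θiso : FMS.gx dec ≃g R := ⟨θE, by intro a b; exact hΘadj a b⟩ with hθiso
  -- τ as graph isomorphisms
  set τiso : Γ₁ → (FMS.gx dec ≃g FMS.gx dec) := fun g =>
    ⟨⟨FMS.τ g, FMS.τ g⁻¹,
      fun p => by rw [← FMS.τ_mul, inv_mul_cancel, FMS.τ_one],
      fun p => by rw [← FMS.τ_mul, mul_inv_cancel, FMS.τ_one]⟩,
      by intro a b; exact FMS.gx_adj_τ dec g a b⟩ with hτiso
  -- α
  set α : Γ₁ → (R ≃g R) := fun g => (θiso.symm.trans (τiso g)).trans θiso with hα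
  have hαapp : ∀ (g : Γ₁) (v : V), α g v = Θ (FMS.τ g (θE.symm v)) := fun g v => rfl
  set αhom : Γ₁ →* (R ≃g R) := MonoidHom.mk' α (by
    intro g h
    apply RelIso.ext
    intro v
    show α (g * h) v = α g (α h v)
    rw [hαapp, hαapp, hαapp]
    have h1 : θE.symm (Θ (FMS.τ h (θE.symm v))) = FMS.τ h (θE.symm v) :=
      θE.symm_apply_apply _
    rw [h1, FMS.τ_mul]) with hαhom
  -- β
  have hBex : ∀ v : V, ∃ n, v ∈ (seq n).B := by
    intro v
    obtain ⟨n, hn⟩ := hdone (Sum.inr (Sum.inl v))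
    exact ⟨n, hn.2⟩
  choose nB hnB using hBex
  set βf : Γ₂ → V → V := fun t v => (seq (nB v)).μ t v with hβf
  have hβval : ∀ (t : Γ₂) (v : V) (n : ℕ), v ∈ (seq n).B → βf t v = (seq n).μ t v := by
    intro t v n hv
    have e1 := (hchain _ _ (le_max_left (nB v) n)).2.2 t v (hnB v)
    have e2 := (hchain _ _ (le_max_right (nB v) n)).2.2 t v hv
    rw [hβf]
    simp only
    rw [← e1, e2]
  have hβ1 : ∀ v, βf 1 v = v := fun v => (seq (nB v)).hμ1 v (hnB v)
  have hβmul : ∀ (s t : Γ₂) (v : V), βf s (βf t v) = βf (s * t) v := by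
    intro s t v
    have h1 : βf t v ∈ (seq (nB v)).B := (seq (nB v)).hBμ t v (hnB v)
    rw [hβval s (βf t v) (nB v) h1]
    show (seq (nB v)).μ s ((seq (nB v)).μ t v) = βf (s * t) v
    rw [← (seq (nB v)).hμm s t v (hnB v)]
  have hβadj : ∀ (t : Γ₂) (a b : V), R.Adj (βf t a) (βf t b) ↔ R.Adj a b := by
    intro t a b
    have ha := (hchain _ _ (le_max_left (nB a) (nB b))).2.1 (hnB a)
    have hb := (hchain _ _ (le_max_right (nB a) (nB b))).2.1 (hnB b)
    rw [hβval t a _ ha, hβval t b _ hb]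
    exact (seq (max (nB a) (nB b))).hμA t a ha b hb
  set βIso : Γ₂ → (R ≃g R) := fun t =>
    ⟨⟨βf t, βf t⁻¹,
      fun v => by rw [hβmul, inv_mul_cancel, hβ1],
      fun v => by rw [hβmul, mul_inv_cancel, hβ1]⟩,
      by intro a b; exact hβadj t a b⟩ with hβIso
  set βhom : Γ₂ →* (R ≃g R) := MonoidHom.mk' βIso (by
    intro s t
    apply RelIso.ext
    intro v
    show βf (s * t) v = βf s (βf t v)
    exact (hβmul s t v).symm) with hβhom
  set ρ : Monoid.Coprod Γ₁ Γ₂ →* (R ≃g R) := Monoid.Coprod.lift αhom βhom with hρ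
  -- evaluation facts
  have hαval : ∀ (g : Γ₁) (x : Γ₁ × ℕ) (v w : V) (n m : ℕ),
      (x, v) ∈ (seq n).P → (FMS.τ g x, w) ∈ (seq m).P → α g v = w := by
    intro g x v w n m h1 h2
    have hsym : θE.symm v = x := by
      apply hΘinj
      have hv : Θ (θE.symm v) = v := θE.apply_symm_apply v
      rw [hv]
      exact (hfunc h1).symm
    rw [hαapp, hsym]
    exact hfunc h2
  have hβev : ∀ (t : Γ₂) (v w : V) (n : ℕ), v ∈ (seq n).B → (seq n).μ t v = w →
      βf t v = w := by
    intro t v w n h1 h2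
    rw [hβval t v n h1, h2]
  -- evaluation of words
  have hRFeval : ∀ (N : ℕ) (la : List (Γ₁ ⊕ Γ₂)) (v w : V),
      FMS.RF (seq N) la v w → ρ (FMS.prodOf la.reverse) v = w := by
    intro N la
    induction la with
    | nil =>
      intro v w h
      rw [List.reverse_nil, FMS.prodOf_nil, map_one, h]
      rfl
    | cons ℓ r ih =>
      intro v w h
      obtain ⟨u, hFL, hRF⟩ := h
      rw [List.reverse_cons, FMS.prodOf_append, map_mul]
      have hstep' : (ρ (FMS.prodOf [ℓ])) v = u := by
        cases ℓ with
        | inl g =>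
          obtain ⟨x, h1, h2⟩ := hFL
          have hpl : FMS.prodOf ([Sum.inl g] : List (Γ₁ ⊕ Γ₂)) = Monoid.Coprod.inl g := by
            simp [FMS.prodOf]
          rw [hpl, hρ, Monoid.Coprod.lift_apply_inl]
          exact hαval g x v u N N h1 h2
        | inr t =>
          have hpl : FMS.prodOf ([Sum.inr t] : List (Γ₁ ⊕ Γ₂)) = Monoid.Coprod.inr t := by
            simp [FMS.prodOf]
          rw [hpl, hρ, Monoid.Coprod.lift_apply_inr]
          exact hβev t v u N hFL.1 hFL.2
      show (ρ (FMS.prodOf r.reverse)) ((ρ (FMS.prodOf [ℓ])) v) = w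
      rw [hstep']
      exact ih u w hRF
  refine ⟨ρ, ?_, ?_⟩
  · -- injectivity
    rw [injective_iff_map_eq_one]
    intro w hw
    by_contra hne
    obtain ⟨l, hlne, hlchain, hlgood, hlprod⟩ := FMS.exists_good_word w hne
    have hlane : l.reverse ≠ [] := by
      intro hcon
      rw [List.reverse_eq_nil_iff] at hcon
      exact hlne hcon
    have hGood : FMS.GoodW l.reverse :=
      ⟨hlane, FMS.altR_rev hlchain, fun ℓ h => hlgood ℓ (List.mem_reverse.1 h)⟩
    obtain ⟨n, hn⟩ := hdone (Sum.inr (Sum.inr (Sum.inr l.reverse)))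
    obtain ⟨v₀, v', hvne, hRF⟩ := hn hGood
    have heval := hRFeval n l.reverse v₀ v' hRF
    rw [List.reverse_reverse, hlprod, hw] at heval
    exact hvne heval.symm
  · -- homogeneity
    intro A φ hinj hiff
    set F : Finset (V × V) := A.image (fun a => (a, φ a)) with hFdef
    have hvalid : FMS.ValidF R F := by
      constructor
      · intro p hp q hq
        obtain ⟨a, ha, hpa⟩ := Finset.mem_image.1 hp
        obtain ⟨b, hb, hqb⟩ := Finset.mem_image.1 hq
        rw [← hpa, ← hqb]
        constructor
        · intro h
          simp only at h ⊢
          rw [h]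
        · intro h
          simp only at h ⊢
          exact hinj (Finset.mem_coe.2 ha) (Finset.mem_coe.2 hb) h
      · intro p hp q hq
        obtain ⟨a, ha, hpa⟩ := Finset.mem_image.1 hp
        obtain ⟨b, hb, hqb⟩ := Finset.mem_image.1 hq
        rw [← hpa, ← hqb]
        exact hiff a ha b hb
    obtain ⟨n, hn⟩ := hdone (Sum.inr (Sum.inr (Sum.inl F)))
    obtain ⟨g₁, g₂, t, ht, hall⟩ := hn hvalid
    refine ⟨Monoid.Coprod.inl g₂ * (Monoid.Coprod.inr t * Monoid.Coprod.inl g₁), ?_⟩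
    intro a ha
    obtain ⟨x, x', m, h1, h2, h3, h4, h5⟩ :=
      hall (a, φ a) (Finset.mem_image_of_mem _ ha)
    have e1 : α g₁ a = m := hαval g₁ x a m n n h1 h2
    have e2 : βf t m = (seq n).μ t m := hβval t m n h3
    have e3 : α g₂ ((seq n).μ t m) = φ a := hαval g₂ x' _ _ n n h4 h5
    show ρ _ a = φ a
    rw [map_mul, map_mul, hρ, Monoid.Coprod.lift_apply_inl, Monoid.Coprod.lift_apply_inr,
      Monoid.Coprod.lift_apply_inl]
    show αhom g₂ (βhom t (αhom g₁ a)) = φ a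
    show α g₂ (βf t (α g₁ a)) = φ a
    rw [e1, e2, e3]
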